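/- arXiv:math/0602501 — 5 statements merged into one kernel-verified Lean document; each statement's English description precedes it below -/
import Mathlib

section
/- Under hypothesis (H), the series Σ² := E[X₁ ⊗ X₁] + ∑_{k≥1} (E[X₁ ⊗ X_{k+1}] + E[X_{k+1} ⊗ X₁]) converges entrywise absolutely, Σ² = lim_{n→∞} (1/n)·E[S_n ⊗ S_n], and for every integer n ≥ 1, |E[S_n ⊗ S_n] − n·Σ²|_∞ ≤ 4CM·∑_{k≥1} k·φ_{k,0}. -/
open MeasureTheory ProbabilityTheory Filter
open scoped ENNReal NNReal

/-- The partial sums `S_n = X_1 + ⋯ + X_n` (with `S_0 = 0`). -/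
noncomputable def Ssum {Ω : Type*} {d : ℕ} (X : ℕ → Ω → Fin d → ℝ) (n : ℕ) (ω : Ω) :
    Fin d → ℝ :=
  ∑ k ∈ Finset.Icc 1 n, X k ω

/-- Stationarity of the sequence `(X_k)`: the law of the shifted process equals
the law of the process. -/
def Stationary {Ω : Type*} [MeasurableSpace Ω] {d : ℕ} (ν : Measure Ω)
    (X : ℕ → Ω → Fin d → ℝ) : Prop :=
  ∀ m : ℕ, Measure.map (fun ω => fun i : ℕ => X (i + m) ω) ν
         = Measure.map (fun ω => fun i : ℕ => X i ω) ν

/-- The covariance-decay hypothesis (1) of hypothesis (H): for all exponents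
`a+b+c ∈ {1,2,3}`, all admissible indices, and every bounded differentiable `F`
with bounded differential (with bounds `FB` and `DB`),
`|Cov(F(S_{i-1}, X_i, X_j, X_k), (X_{k+p}^{(i₁)})^a (X_{k+p+q}^{(i₂)})^b (X_{k+p+l}^{(i₃)})^c)|
  ≤ C (FB + DB) φ_{p,l}`. -/
def CovHyp {Ω : Type*} [MeasurableSpace Ω] {d : ℕ} (ν : Measure Ω)
    (X : ℕ → Ω → Fin d → ℝ) (C : ℝ) (φ : ℕ → ℕ → ℝ) : Prop :=
  ∀ a b c : ℕ, 1 ≤ a + b + c → a + b + c ≤ 3 →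
  ∀ i j k p q l : ℕ, 1 ≤ i → i ≤ j → j ≤ k → q ≤ l →
  ∀ i₁ i₂ i₃ : Fin d,
  ∀ F : (Fin d → ℝ) × (Fin d → ℝ) × (Fin d → ℝ) × (Fin d → ℝ) → ℝ,
  ∀ FB DB : ℝ, Differentiable ℝ F → (∀ x, |F x| ≤ FB) → (∀ x, ‖fderiv ℝ F x‖ ≤ DB) →
    |(∫ ω, F (Ssum X (i - 1) ω, X i ω, X j ω, X k ω) *
          ((X (k + p) ω i₁) ^ a * (X (k + p + q) ω i₂) ^ b * (X (k + p + l) ω i₃) ^ c) ∂ν)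
        - (∫ ω, F (Ssum X (i - 1) ω, X i ω, X j ω, X k ω) ∂ν) *
          (∫ ω, (X (k + p) ω i₁) ^ a * (X (k + p + q) ω i₂) ^ b
              * (X (k + p + l) ω i₃) ^ c ∂ν)|
      ≤ C * (FB + DB) * φ p l

/-- The standard Gaussian measure on `ℝ^d` (iid standard normal coordinates). -/
noncomputable def stdGaussian (d : ℕ) : Measure (Fin d → ℝ) :=
  Measure.pi fun _ => ProbabilityTheory.gaussianReal 0 1

/-- `γ` is the centered Gaussian measure on `ℝ^d` with covariance matrix `Sig2`:
the law of `A·Z` for a matrix `A` with `A Aᵀ = Sig2` and `Z` standard Gaussian. -/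
def IsCenteredGaussianCov {d : ℕ} (γ : Measure (Fin d → ℝ))
    (Sig2 : Matrix (Fin d) (Fin d) ℝ) : Prop :=
  ∃ A : Matrix (Fin d) (Fin d) ℝ, A * A.transpose = Sig2 ∧
    γ = Measure.map (fun z => A.mulVec z) (stdGaussian d)

/- ### Auxiliary lemmas -/

lemma clamp_exists (M w : ℝ) (hM : 0 ≤ M) (hw : 0 < w) :
    ∃ f g : ℝ → ℝ, (∀ t, HasDerivAt f (g t) t) ∧ (∀ t, |g t| ≤ 1) ∧
      (∀ t, |f t| ≤ M + w) ∧ (∀ t, |t| ≤ M → f t = t) := by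
  set h : ℝ → ℝ := fun s => min 1 (max 0 ((M + w - |s|)/w)) with hh
  have hcont : Continuous h := by
    apply Continuous.min continuous_const
    apply Continuous.max continuous_const
    fun_prop
  have h01 : ∀ s, 0 ≤ h s ∧ h s ≤ 1 := by
    intro s
    exact ⟨le_min one_pos.le (le_max_left _ _), min_le_left _ _⟩
  have hone : ∀ s, |s| ≤ M → h s = 1 := by
    intro s hs
    have : (1:ℝ) ≤ (M + w - |s|)/w := by
      rw [le_div_iff₀ hw]; linarith
    simp only [hh]
    rw [min_eq_left]; exact le_max_of_le_right this
  have hzero : ∀ s, M + w ≤ |s| → h s = 0 := by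
    intro s hs
    have h1 : (M + w - |s|)/w ≤ 0 := div_nonpos_of_nonpos_of_nonneg (by linarith) hw.le
    simp only [hh]
    rw [max_eq_left h1, min_eq_right zero_le_one]
  set f : ℝ → ℝ := fun t => ∫ s in (0:ℝ)..t, h s with hf
  have hint : ∀ a b : ℝ, IntervalIntegrable h volume a b := fun a b => hcont.intervalIntegrable a b
  have hderiv : ∀ t, HasDerivAt f (h t) t := by
    intro t
    exact intervalIntegral.integral_hasDerivAt_right (hint 0 t) (hcont.stronglyMeasurableAtFilter _ _) hcont.continuousAt
  have key : ∀ t : ℝ, 0 ≤ t → f t ≤ M + w ∧ 0 ≤ f t := by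
    intro t ht
    constructor
    · rcases le_or_gt t (M + w) with h1 | h1
      · calc f t ≤ ∫ s in (0:ℝ)..t, (1:ℝ) := by
              apply intervalIntegral.integral_mono_on ht (hint 0 t) (intervalIntegrable_const)
              intro s _; exact (h01 s).2
          _ = t := by simp
          _ ≤ M + w := h1
      · have hsplit : f t = (∫ s in (0:ℝ)..(M+w), h s) + ∫ s in (M+w)..t, h s := by
          rw [hf]; rw [intervalIntegral.integral_add_adjacent_intervals (hint 0 (M+w)) (hint (M+w) t)]
        have h2 : (∫ s in (M+w)..t, h s) = 0 := by
          rw [intervalIntegral.integral_congr (g := fun _ => (0:ℝ))]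
          · simp
          · intro s hs
            rw [Set.uIcc_of_le h1.le] at hs
            exact hzero s (le_trans hs.1 (le_abs_self s))
        have h3 : (∫ s in (0:ℝ)..(M+w), h s) ≤ M + w := by
          calc (∫ s in (0:ℝ)..(M+w), h s) ≤ ∫ s in (0:ℝ)..(M+w), (1:ℝ) := by
                apply intervalIntegral.integral_mono_on (by linarith) (hint _ _) intervalIntegrable_const
                intro s _; exact (h01 s).2
            _ = M + w := by simp
        rw [hsplit, h2]; linarith
    · rw [hf]
      apply intervalIntegral.integral_nonneg ht
      intro s _; exact (h01 s).1
  have hodd : ∀ t : ℝ, f (-t) = - f t := by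
    intro t
    have heven : (fun s => h (-s)) = h := by
      funext s; simp only [hh, abs_neg]
    have : f (-t) = ∫ s in (0:ℝ)..(-t), h (-s) := by
      rw [hf]; simp only; rw [heven]
    rw [this, intervalIntegral.integral_comp_neg]
    rw [hf]; simp only [neg_neg, neg_zero]
    rw [intervalIntegral.integral_symm]
  refine ⟨f, h, hderiv, fun t => by
      rw [abs_le]; exact ⟨by linarith [(h01 t).1], (h01 t).2⟩, ?_, ?_⟩
  · intro t
    rcases le_total 0 t with ht | ht
    · rw [abs_le]; have := key t ht; constructor <;> linarith
    · have := key (-t) (by linarith)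
      rw [← neg_neg t, hodd, abs_neg, abs_le]
      constructor <;> linarith
  · intro t ht
    have habs := abs_le.mp ht
    have : f t = ∫ s in (0:ℝ)..t, (1:ℝ) := by
      apply intervalIntegral.integral_congr
      intro s hs
      apply hone
      rcases le_total 0 t with h1 | h1
      · rw [Set.uIcc_of_le h1, Set.mem_Icc] at hs
        rw [abs_le]; constructor <;> linarith [hs.1, hs.2]
      · rw [Set.uIcc_of_ge h1, Set.mem_Icc] at hs
        rw [abs_le]; constructor <;> linarith [hs.1, hs.2]
    rw [this]; simp

lemma F_props {d : ℕ} (i : Fin d) (f g : ℝ → ℝ) (hderiv : ∀ t, HasDerivAt f (g t) t)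
    (hg : ∀ t, |g t| ≤ 1) :
    Differentiable ℝ (fun v : (Fin d → ℝ) × (Fin d → ℝ) × (Fin d → ℝ) × (Fin d → ℝ) => f (v.2.1 i)) ∧
    ∀ v : (Fin d → ℝ) × (Fin d → ℝ) × (Fin d → ℝ) × (Fin d → ℝ),
      ‖fderiv ℝ (fun v : (Fin d → ℝ) × (Fin d → ℝ) × (Fin d → ℝ) × (Fin d → ℝ) => f (v.2.1 i)) v‖ ≤ 1 := by
  set E := (Fin d → ℝ) × (Fin d → ℝ) × (Fin d → ℝ) × (Fin d → ℝ)
  set π : E →L[ℝ] ℝ :=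
    (ContinuousLinearMap.proj i).comp ((ContinuousLinearMap.fst ℝ (Fin d → ℝ) ((Fin d → ℝ) × (Fin d → ℝ))).comp
      (ContinuousLinearMap.snd ℝ (Fin d → ℝ) ((Fin d → ℝ) × (Fin d → ℝ) × (Fin d → ℝ)))) with hπ
  have hπapp : ∀ v : E, π v = v.2.1 i := fun v => rfl
  have hπnorm : ‖π‖ ≤ 1 := by
    apply ContinuousLinearMap.opNorm_le_bound _ zero_le_one
    intro v
    rw [hπapp, one_mul]
    calc ‖v.2.1 i‖ ≤ ‖v.2.1‖ := norm_le_pi_norm _ i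
      _ ≤ ‖v.2‖ := norm_fst_le _
      _ ≤ ‖v‖ := norm_snd_le _
  have hFD : ∀ v : E, HasFDerivAt (fun v : E => f (v.2.1 i)) (g (π v) • π) v := by
    intro v
    exact (hderiv (π v)).comp_hasFDerivAt v π.hasFDerivAt
  constructor
  · intro v; exact (hFD v).differentiableAt
  · intro v
    rw [(hFD v).fderiv, norm_smul]
    calc ‖g (π v)‖ * ‖π‖ ≤ 1 * 1 := by
          apply mul_le_mul (hg _) hπnorm (norm_nonneg _) zero_le_one
      _ = 1 := one_mul 1

lemma key_tail_sum (b : ℕ → ℝ) (hb : ∀ k, 0 ≤ b k)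
    (hsum : Summable fun k : ℕ => ((k : ℝ) + 1) * b k) (n : ℕ) :
    ∑ m ∈ Finset.range n, ∑' k, b (k + m) ≤ ∑' k : ℕ, ((k : ℝ) + 1) * b k := by
  have hsb : Summable b := by
    apply Summable.of_nonneg_of_le hb _ hsum
    intro k
    nlinarith [hb k, Nat.cast_nonneg (α := ℝ) k]
  set g : ℕ → ℕ → ℝ := fun m j => if m ≤ j then b j else 0 with hg
  have hgs : ∀ m, Summable (g m) := by
    intro m
    apply hsb.of_nonneg_of_le
    · intro j; by_cases h : m ≤ j <;> simp [hg, h, hb j]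
    · intro j; by_cases h : m ≤ j <;> simp [hg, h, hb j]
  have hshift : ∀ m, ∑' k, b (k + m) = ∑' j, g m j := by
    intro m
    have hinj : Function.Injective (fun k : ℕ => k + m) := add_left_injective m
    have := hinj.tsum_eq (f := g m) ?_
    · rw [← this]
      apply tsum_congr
      intro k
      simp [hg, Nat.le_add_left]
    · intro j hj
      simp only [hg, Function.mem_support] at hj
      by_contra hr
      simp only [Set.mem_range, not_exists] at hr
      have : ¬ m ≤ j := by
        intro h
        exact hr (j - m) (by omega)
      simp [this] at hj
  calc ∑ m ∈ Finset.range n, ∑' k, b (k + m)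
      = ∑ m ∈ Finset.range n, ∑' j, g m j := by
        apply Finset.sum_congr rfl; intro m _; exact hshift m
    _ = ∑' j, ∑ m ∈ Finset.range n, g m j := (Summable.tsum_finsetSum (fun m _ => hgs m)).symm
    _ ≤ ∑' k : ℕ, ((k : ℝ) + 1) * b k := by
        apply Summable.tsum_le_tsum _ _ hsum
        · intro j
          calc ∑ m ∈ Finset.range n, g m j
              ≤ ∑ m ∈ Finset.range n, (if m ≤ j then b j else 0) := le_of_eq rfl
            _ = ((Finset.range n).filter (fun m => m ≤ j)).card • b j := by
                rw [← Finset.sum_filter, Finset.sum_const]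
            _ ≤ (j + 1 : ℕ) • b j := by
                apply nsmul_le_nsmul_left (hb j)
                have : (Finset.range n).filter (fun m => m ≤ j) ⊆ Finset.range (j+1) := by
                  intro m hm
                  simp only [Finset.mem_filter, Finset.mem_range] at hm ⊢
                  omega
                simpa using Finset.card_le_card this
            _ = ((j : ℝ) + 1) * b j := by
                simp [nsmul_eq_mul]
        · exact summable_sum (fun m _ => hgs m)

lemma double_sum_formula (cc dd : ℕ → ℝ) (e : ℕ → ℕ → ℝ)
    (h1 : ∀ a k, e (a+1) (a+1+k) = cc k) (h2 : ∀ a k, e (a+1+k) (a+1) = dd k) (n : ℕ) :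
    ∑ a ∈ Finset.range n, ∑ b ∈ Finset.range n, e (a+1) (b+1)
      = n * cc 0 + ∑ m ∈ Finset.range n,
          ((∑ k ∈ Finset.range m, cc (k+1)) + ∑ k ∈ Finset.range m, dd (k+1)) := by
  induction n with
  | zero => simp
  | succ n ih =>
    have hrow : ∑ a ∈ Finset.range n, e (a+1) (n+1) = ∑ k ∈ Finset.range n, cc (k+1) := by
      have : ∀ a ∈ Finset.range n, e (a+1) (n+1) = cc (n - a) := by
        intro a ha
        rw [Finset.mem_range] at ha
        have : n + 1 = a + 1 + (n - a) := by omega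
        rw [this, h1]
      rw [Finset.sum_congr rfl this]
      rw [← Finset.sum_range_reflect (fun k => cc (k+1)) n]
      apply Finset.sum_congr rfl
      intro a ha
      rw [Finset.mem_range] at ha
      congr 1
      omega
    have hcol : ∑ b ∈ Finset.range n, e (n+1) (b+1) = ∑ k ∈ Finset.range n, dd (k+1) := by
      have : ∀ b ∈ Finset.range n, e (n+1) (b+1) = dd (n - b) := by
        intro b hb
        rw [Finset.mem_range] at hb
        have : n + 1 = b + 1 + (n - b) := by omega
        rw [this, h2]
      rw [Finset.sum_congr rfl this]
      rw [← Finset.sum_range_reflect (fun k => dd (k+1)) n]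
      apply Finset.sum_congr rfl
      intro b hb
      rw [Finset.mem_range] at hb
      congr 1
      omega
    have hdiag : e (n+1) (n+1) = cc 0 := by
      have := h1 n 0
      simpa using this
    calc ∑ a ∈ Finset.range (n+1), ∑ b ∈ Finset.range (n+1), e (a+1) (b+1)
        = ∑ a ∈ Finset.range n, (∑ b ∈ Finset.range n, e (a+1) (b+1) + e (a+1) (n+1))
          + (∑ b ∈ Finset.range n, e (n+1) (b+1) + e (n+1) (n+1)) := by
          rw [Finset.sum_range_succ]
          congr 1
          · apply Finset.sum_congr rfl
            intro a _
            rw [Finset.sum_range_succ]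
          · rw [Finset.sum_range_succ]
      _ = (∑ a ∈ Finset.range n, ∑ b ∈ Finset.range n, e (a+1) (b+1))
          + ∑ a ∈ Finset.range n, e (a+1) (n+1)
          + (∑ b ∈ Finset.range n, e (n+1) (b+1) + e (n+1) (n+1)) := by
          rw [Finset.sum_add_distrib]
      _ = (n+1 : ℕ) * cc 0 + ∑ m ∈ Finset.range (n+1),
            ((∑ k ∈ Finset.range m, cc (k+1)) + ∑ k ∈ Finset.range m, dd (k+1)) := by
          rw [ih, hrow, hcol, hdiag, Finset.sum_range_succ]
          push_cast
          ring

section Aux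
variable {Ω : Type*} [MeasurableSpace Ω] {d : ℕ} (ν : Measure Ω)
  (X : ℕ → Ω → Fin d → ℝ)

lemma proc_meas (hmeas : ∀ k, Measurable (X k)) (m : ℕ) :
    Measurable (fun ω => fun i : ℕ => X (i + m) ω) :=
  measurable_pi_lambda _ (fun i => hmeas (i + m))

lemma shift_int (hmeas : ∀ k, Measurable (X k)) (hstat : Stationary ν X)
    (m a b : ℕ) (i j : Fin d) :
    ∫ ω, X (a + m) ω i * X (b + m) ω j ∂ν = ∫ ω, X a ω i * X b ω j ∂ν := by
  have hg : Measurable (fun y : ℕ → Fin d → ℝ => y a i * y b j) :=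
    (Measurable.mul (f := fun y : ℕ → Fin d → ℝ => y a i) (g := fun y => y b j) ((measurable_pi_apply i).comp (measurable_pi_apply a))
      ((measurable_pi_apply j).comp (measurable_pi_apply b)))
  have h1 : ∫ ω, X (a + m) ω i * X (b + m) ω j ∂ν
      = ∫ y, y a i * y b j ∂(Measure.map (fun ω => fun i : ℕ => X (i + m) ω) ν) := by
    rw [integral_map (proc_meas X hmeas m).aemeasurable hg.aestronglyMeasurable]
  have h2 : ∫ ω, X a ω i * X b ω j ∂ν
      = ∫ y, y a i * y b j ∂(Measure.map (fun ω => fun i : ℕ => X i ω) ν) := by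
    rw [integral_map (measurable_pi_lambda _ (fun i => hmeas i)).aemeasurable
      hg.aestronglyMeasurable]
  rw [h1, h2, hstat m]

lemma ae_bound_all (hmeas : ∀ k, Measurable (X k)) (hstat : Stationary ν X)
    {M : ℝ} (hbound : ∀ᵐ ω ∂ν, ‖X 0 ω‖ ≤ M) (k : ℕ) :
    ∀ᵐ ω ∂ν, ‖X k ω‖ ≤ M := by
  have hset : MeasurableSet {x : Fin d → ℝ | ‖x‖ ≤ M} :=
    (isClosed_le continuous_norm continuous_const).measurableSet
  have hlaw : Measure.map (X k) ν = Measure.map (X 0) ν := by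
    have e1 : X k = (fun y : ℕ → Fin d → ℝ => y 0) ∘ (fun ω => fun i : ℕ => X (i + k) ω) := by
      funext ω; simp
    have e2 : X 0 = (fun y : ℕ → Fin d → ℝ => y 0) ∘ (fun ω => fun i : ℕ => X i ω) := by
      funext ω; simp
    rw [e1, e2, ← Measure.map_map (measurable_pi_apply 0) (proc_meas X hmeas k),
      ← Measure.map_map (measurable_pi_apply 0) (measurable_pi_lambda _ (fun i => hmeas i)),
      hstat k]
  have h0 : ∀ᵐ x ∂(Measure.map (X 0) ν), ‖x‖ ≤ M :=
    (ae_map_iff (hmeas 0).aemeasurable hset).mpr hbound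
  rw [← hlaw] at h0
  exact (ae_map_iff (hmeas k).aemeasurable hset).mp h0

lemma int_prod (hmeas : ∀ k, Measurable (X k)) (hstat : Stationary ν X)
    [IsProbabilityMeasure ν]
    {M : ℝ} (hM : 0 ≤ M) (hbound : ∀ᵐ ω ∂ν, ‖X 0 ω‖ ≤ M) (a b : ℕ) (i j : Fin d) :
    Integrable (fun ω => X a ω i * X b ω j) ν := by
  apply Integrable.mono' (integrable_const (M * M))
    (((hmeas a).eval.mul (hmeas b).eval)).aestronglyMeasurable
  filter_upwards [ae_bound_all ν X hmeas hstat hbound a, ae_bound_all ν X hmeas hstat hbound b]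
    with ω h1 h2
  rw [Real.norm_eq_abs, Pi.mul_apply, abs_mul]
  apply mul_le_mul _ _ (abs_nonneg _) hM
  · exact le_trans (norm_le_pi_norm (X a ω) i) h1
  · exact le_trans (norm_le_pi_norm (X b ω) j) h2

lemma cent_coord (hmeas : ∀ k, Measurable (X k)) (hstat : Stationary ν X)
    [IsProbabilityMeasure ν]
    {M : ℝ} (hbound : ∀ᵐ ω ∂ν, ‖X 0 ω‖ ≤ M) (hcent : ∀ k, ∫ ω, X k ω ∂ν = 0)
    (k : ℕ) (j : Fin d) : ∫ ω, X k ω j ∂ν = 0 := by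
  have hInt : Integrable (X k) ν := by
    apply Integrable.mono' (integrable_const M) (hmeas k).aestronglyMeasurable
    exact ae_bound_all ν X hmeas hstat hbound k
  have := (ContinuousLinearMap.proj (R := ℝ) (φ := fun _ : Fin d => ℝ) j).integral_comp_comm hInt
  simp only [ContinuousLinearMap.proj_apply] at this
  rw [this, hcent k]
  rfl

lemma cov_bound [IsProbabilityMeasure ν]
    (C M : ℝ) (hC : 1 ≤ C) (hM : 1 ≤ M)
    (hbound1 : ∀ᵐ ω ∂ν, ‖X 1 ω‖ ≤ M)
    (hcent1k : ∀ k (j : Fin d), ∫ ω, X k ω j ∂ν = 0)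
    (φ : ℕ → ℕ → ℝ) (hφ0 : ∀ p l, 0 ≤ φ p l)
    (hH : CovHyp ν X C φ) (k : ℕ) (i j : Fin d) :
    |∫ ω, X 1 ω i * X (1 + k) ω j ∂ν| ≤ 2 * C * M * φ k 0 := by
  have hmain : |∫ ω, X 1 ω i * X (1 + k) ω j ∂ν| ≤ C * (M + 1) * φ k 0 := by
    apply le_of_forall_pos_le_add
    intro ε hε
    set w : ℝ := ε / (C * φ k 0 + 1) with hw
    have hwpos : 0 < w := div_pos hε (by nlinarith [hφ0 k 0])
    obtain ⟨f, g, hfd, hg1, hfb, hfid⟩ := clamp_exists M w (by linarith) hwpos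
    obtain ⟨hFdiff, hFD⟩ := F_props i f g hfd hg1
    set F : (Fin d → ℝ) × (Fin d → ℝ) × (Fin d → ℝ) × (Fin d → ℝ) → ℝ :=
      fun v => f (v.2.1 i) with hF
    have hFb : ∀ v, |F v| ≤ M + w := fun v => hfb _
    have hcov := hH 1 0 0 (by norm_num) (by norm_num) 1 1 1 k 0 0 le_rfl le_rfl le_rfl le_rfl
      j j j F (M + w) 1 hFdiff hFb hFD
    simp only [pow_one, pow_zero, mul_one] at hcov
    have he1 : (∫ ω, F (Ssum X (1 - 1) ω, X 1 ω, X 1 ω, X 1 ω) * X (1 + k) ω j ∂ν)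
        = ∫ ω, X 1 ω i * X (1 + k) ω j ∂ν := by
      apply integral_congr_ae
      filter_upwards [hbound1] with ω h1
      have : F (Ssum X (1 - 1) ω, X 1 ω, X 1 ω, X 1 ω) = X 1 ω i :=
        hfid _ (le_trans (norm_le_pi_norm (X 1 ω) i) h1)
      rw [this]
    have he2 : (∫ ω, X (1 + k) ω j ∂ν) = 0 := hcent1k (1 + k) j
    rw [he1, he2, mul_zero, sub_zero] at hcov
    have hd : (0:ℝ) < C * φ k 0 + 1 := by nlinarith [hφ0 k 0]
    have h1 : C * φ k 0 * (C * φ k 0 + 1)⁻¹ ≤ 1 := by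
      rw [mul_inv_le_iff₀ hd]; linarith
    have hwb : C * φ k 0 * w ≤ ε := by
      have : C * φ k 0 * w = (C * φ k 0 * (C * φ k 0 + 1)⁻¹) * ε := by
        rw [hw, div_eq_mul_inv]; ring
      rw [this]
      nlinarith [h1, hε.le, mul_nonneg (mul_nonneg (by linarith : (0:ℝ) ≤ C) (hφ0 k 0)) (inv_nonneg.mpr hd.le)]
    calc |∫ ω, X 1 ω i * X (1 + k) ω j ∂ν| ≤ C * (M + w + 1) * φ k 0 := hcov
      _ = C * (M + 1) * φ k 0 + C * φ k 0 * w := by ring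
      _ ≤ C * (M + 1) * φ k 0 + ε := by linarith
  calc |∫ ω, X 1 ω i * X (1 + k) ω j ∂ν| ≤ C * (M + 1) * φ k 0 := hmain
    _ ≤ 2 * C * M * φ k 0 := by
        nlinarith [mul_nonneg (mul_nonneg (by linarith : (0:ℝ) ≤ C) (hφ0 k 0)) (by linarith : (0:ℝ) ≤ M - 1)]

lemma T_expand (hmeas : ∀ k, Measurable (X k)) (hstat : Stationary ν X)
    [IsProbabilityMeasure ν]
    {M : ℝ} (hM : 0 ≤ M) (hbound : ∀ᵐ ω ∂ν, ‖X 0 ω‖ ≤ M) (n : ℕ) (i j : Fin d) :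
    (∫ ω, Ssum X n ω i * Ssum X n ω j ∂ν)
      = ∑ a ∈ Finset.range n, ∑ b ∈ Finset.range n, ∫ ω, X (a+1) ω i * X (b+1) ω j ∂ν := by
  have hS : ∀ (ω : Ω) (i : Fin d), Ssum X n ω i = ∑ a ∈ Finset.range n, X (a+1) ω i := by
    intro ω i
    rw [Ssum, Finset.sum_apply, ← Finset.Ico_add_one_right_eq_Icc, Finset.sum_Ico_eq_sum_range]
    apply Finset.sum_congr (by norm_num)
    intro a _
    rw [Nat.add_comm]
  have step1 : (∫ ω, Ssum X n ω i * Ssum X n ω j ∂ν)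
      = ∫ ω, ∑ a ∈ Finset.range n, ∑ b ∈ Finset.range n, X (a+1) ω i * X (b+1) ω j ∂ν := by
    apply integral_congr_ae
    filter_upwards with ω
    rw [hS ω i, hS ω j, Finset.sum_mul_sum]
  rw [step1, integral_finset_sum]
  · apply Finset.sum_congr rfl
    intro a _
    rw [integral_finset_sum]
    intro b _
    exact int_prod ν X hmeas hstat hM hbound _ _ i j
  · intro a _
    exact integrable_finset_sum _ (fun b _ => int_prod ν X hmeas hstat hM hbound _ _ i j)

end Aux

/-- Under hypothesis (H): the series
`Σ² = E[X₁^{⊗2}] + ∑_{k≥1} (E[X₁ ⊗ X_{k+1}] + E[X_{k+1} ⊗ X₁])` converges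
entrywise absolutely, `Σ² = lim (1/n) E[S_n^{⊗2}]`, and
`|E[S_n^{⊗2}] − n Σ²|_∞ ≤ 4CM ∑_{k≥1} k φ_{k,0}` for all `n ≥ 1`. -/
theorem stmt1 {d : ℕ} (hd : 1 ≤ d) {Ω : Type*} [MeasurableSpace Ω]
    (ν : Measure Ω) [IsProbabilityMeasure ν]
    (X : ℕ → Ω → Fin d → ℝ) (hmeas : ∀ k, Measurable (X k))
    (hstat : Stationary ν X) (hcent : ∀ k, ∫ ω, X k ω ∂ν = 0)
    (C M : ℝ) (hC : 1 ≤ C) (hM : 1 ≤ M) (hbound : ∀ᵐ ω ∂ν, ‖X 0 ω‖ ≤ M)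
    (r : ℕ) (φ : ℕ → ℕ → ℝ) (hφ0 : ∀ p l, 0 ≤ φ p l) (hφ1 : ∀ p l, φ p l ≤ 1)
    (hφsum : Summable fun p : ℕ => (p : ℝ) *
      (Finset.range (p / (r + 1) + 1)).sup' Finset.nonempty_range_add_one (φ p))
    (hH : CovHyp ν X C φ) :
    ∃ Sig2 : Matrix (Fin d) (Fin d) ℝ,
      (∀ i j, Summable fun k : ℕ =>
        |(∫ ω, X 1 ω i * X (k + 2) ω j ∂ν) + ∫ ω, X (k + 2) ω i * X 1 ω j ∂ν|) ∧
      (∀ i j, HasSum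
        (fun k : ℕ =>
          (∫ ω, X 1 ω i * X (k + 2) ω j ∂ν) + ∫ ω, X (k + 2) ω i * X 1 ω j ∂ν)
        (Sig2 i j - ∫ ω, X 1 ω i * X 1 ω j ∂ν)) ∧
      (∀ i j, Tendsto (fun n : ℕ => (∫ ω, Ssum X n ω i * Ssum X n ω j ∂ν) / n)
        atTop (nhds (Sig2 i j))) ∧
      (∀ n : ℕ, 1 ≤ n → ∀ i j,
        |(∫ ω, Ssum X n ω i * Ssum X n ω j ∂ν) - n * Sig2 i j|
          ≤ 4 * C * M * ∑' k : ℕ, ((k : ℝ) + 1) * φ (k + 1) 0) := by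
  have hM0 : (0:ℝ) ≤ M := by linarith
  have hC0 : (0:ℝ) ≤ C := by linarith
  set c : ℕ → Fin d → Fin d → ℝ := fun k i j => ∫ ω, X 1 ω i * X (k+1) ω j ∂ν with hcdef
  have hb1 : ∀ᵐ ω ∂ν, ‖X 1 ω‖ ≤ M := ae_bound_all ν X hmeas hstat hbound 1
  have hcc : ∀ k (j : Fin d), ∫ ω, X k ω j ∂ν = 0 :=
    cent_coord ν X hmeas hstat hbound hcent
  -- covariance bound
  have hcb : ∀ (k : ℕ) (i j : Fin d), |c k i j| ≤ 2 * C * M * φ k 0 := by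
    intro k i j
    have := cov_bound ν X C M hC hM hb1 hcc φ hφ0 hH k i j
    rw [hcdef]
    simpa [show 1 + k = k + 1 by omega] using this
  -- summability
  set b : ℕ → ℝ := fun k => φ (k+1) 0 with hbdef
  have hsummable1 : Summable (fun p : ℕ => (p : ℝ) * φ p 0) := by
    apply Summable.of_nonneg_of_le _ _ hφsum
    · intro p
      exact mul_nonneg (Nat.cast_nonneg p) (hφ0 p 0)
    · intro p
      apply mul_le_mul_of_nonneg_left _ (Nat.cast_nonneg p)
      exact Finset.le_sup' (φ p) (Finset.mem_range.mpr (Nat.succ_pos _))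
  have hs1 : Summable (fun k : ℕ => ((k : ℝ) + 1) * b k) := by
    have := (summable_nat_add_iff (f := fun p : ℕ => (p : ℝ) * φ p 0) 1).mpr hsummable1
    apply this.congr
    intro k
    push_cast
    ring
  have hsb : Summable b := by
    apply Summable.of_nonneg_of_le (fun k => hφ0 _ 0) _ hs1
    intro k
    nlinarith [hφ0 (k+1) 0, Nat.cast_nonneg (α := ℝ) k]
  set a' : Fin d → Fin d → ℕ → ℝ := fun i j k => c (k+1) i j + c (k+1) j i with hadef
  have habs : ∀ (i j : Fin d) (k : ℕ), |a' i j k| ≤ 4 * C * M * b k := by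
    intro i j k
    calc |a' i j k| ≤ |c (k+1) i j| + |c (k+1) j i| := abs_add_le _ _
      _ ≤ 2 * C * M * φ (k+1) 0 + 2 * C * M * φ (k+1) 0 := add_le_add (hcb _ i j) (hcb _ j i)
      _ = 4 * C * M * b k := by rw [hbdef]; ring
  have hsumabs : ∀ i j, Summable fun k => |a' i j k| := by
    intro i j
    apply Summable.of_nonneg_of_le (fun k => abs_nonneg _) (habs i j) (hsb.mul_left _)
  have hsa : ∀ i j, Summable (a' i j) := fun i j => (hsumabs i j).of_abs
  -- matching the statement's series with a'
  have hmatch : ∀ (i j : Fin d) (k : ℕ),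
      (∫ ω, X 1 ω i * X (k + 2) ω j ∂ν) + (∫ ω, X (k + 2) ω i * X 1 ω j ∂ν) = a' i j k := by
    intro i j k
    have h2 : (∫ ω, X (k+2) ω i * X 1 ω j ∂ν) = ∫ ω, X 1 ω j * X (k+2) ω i ∂ν := by
      apply integral_congr_ae
      filter_upwards with ω
      ring
    rw [h2, hadef, hcdef]
  set Sig2 : Matrix (Fin d) (Fin d) ℝ := Matrix.of fun i j => c 0 i j + ∑' k, a' i j k
    with hSdef
  have hS2app : ∀ i j, Sig2 i j = c 0 i j + ∑' k, a' i j k := fun i j => rfl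
  -- the quantitative identity
  have hT : ∀ (n : ℕ) (i j : Fin d), (∫ ω, Ssum X n ω i * Ssum X n ω j ∂ν)
      = n * c 0 i j + ∑ m ∈ Finset.range n, ∑ k ∈ Finset.range m, a' i j k := by
    intro n i j
    have h1 : ∀ a k : ℕ, (∫ ω, X (a+1) ω i * X (a+1+k) ω j ∂ν) = c k i j := by
      intro a k
      have e2 : a + 1 + k = (k+1) + a := by omega
      have e1 : a + 1 = 1 + a := by omega
      rw [e2, e1, shift_int ν X hmeas hstat a 1 (k+1) i j]
    have h2 : ∀ a k : ℕ, (∫ ω, X (a+1+k) ω i * X (a+1) ω j ∂ν) = c k j i := by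
      intro a k
      have hcomm : (∫ ω, X (a+1+k) ω i * X (a+1) ω j ∂ν)
          = ∫ ω, X (a+1) ω j * X (a+1+k) ω i ∂ν := by
        apply integral_congr_ae
        filter_upwards with ω
        ring
      rw [hcomm]
      have e2 : a + 1 + k = (k+1) + a := by omega
      have e1 : a + 1 = 1 + a := by omega
      rw [e2, e1, shift_int ν X hmeas hstat a 1 (k+1) j i]
    rw [T_expand ν X hmeas hstat hM0 hbound n i j]
    rw [double_sum_formula (fun k => c k i j) (fun k => c k j i)
      (fun a b => ∫ ω, X a ω i * X b ω j ∂ν) h1 h2 n]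
    congr 1
    apply Finset.sum_congr rfl
    intro m _
    rw [← Finset.sum_add_distrib]
  -- the main quantitative bound (for all n)
  have hbnd : ∀ (n : ℕ) (i j : Fin d),
      |(∫ ω, Ssum X n ω i * Ssum X n ω j ∂ν) - n * Sig2 i j|
        ≤ 4 * C * M * ∑' k : ℕ, ((k : ℝ) + 1) * φ (k + 1) 0 := by
    intro n i j
    set L : ℝ := ∑' k, a' i j k with hLdef
    have e1 : (∫ ω, Ssum X n ω i * Ssum X n ω j ∂ν) - n * Sig2 i j
        = ∑ m ∈ Finset.range n, ((∑ k ∈ Finset.range m, a' i j k) - L) := by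
      rw [hT n i j, hS2app i j, Finset.sum_sub_distrib, Finset.sum_const, Finset.card_range]
      push_cast
      ring
    rw [e1]
    have htail : ∀ m : ℕ, |(∑ k ∈ Finset.range m, a' i j k) - L| ≤ 4*C*M * ∑' k, b (k + m) := by
      intro m
      have hps := Summable.sum_add_tsum_nat_add (f := a' i j) m (hsa i j)
      have : (∑ k ∈ Finset.range m, a' i j k) - L = -(∑' k, a' i j (k + m)) := by
        rw [hLdef, ← hps]; ring
      rw [this, abs_neg]
      have hshift_abs : Summable fun k => |a' i j (k + m)| :=
        (summable_nat_add_iff m).mpr (hsumabs i j)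
      have hshift_b : Summable fun k : ℕ => 4*C*M * b (k + m) :=
        ((summable_nat_add_iff (f := b) m).mpr hsb).mul_left _
      have t1 : |∑' k, a' i j (k + m)| ≤ ∑' k, |a' i j (k + m)| := by
        have h := norm_tsum_le_tsum_norm (f := fun k : ℕ => a' i j (k + m)) (by
          simpa only [Real.norm_eq_abs] using hshift_abs)
        simpa only [Real.norm_eq_abs] using h
      have t2 : (∑' k, |a' i j (k + m)|) ≤ ∑' k : ℕ, 4*C*M * b (k + m) :=
        Summable.tsum_le_tsum (fun k => habs i j (k+m)) hshift_abs hshift_b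
      have t3 : (∑' k : ℕ, 4*C*M * b (k + m)) = 4*C*M * ∑' k, b (k + m) :=
        tsum_mul_left
      linarith
    calc |∑ m ∈ Finset.range n, ((∑ k ∈ Finset.range m, a' i j k) - L)|
        ≤ ∑ m ∈ Finset.range n, |(∑ k ∈ Finset.range m, a' i j k) - L| :=
          Finset.abs_sum_le_sum_abs _ _
      _ ≤ ∑ m ∈ Finset.range n, 4*C*M * ∑' k, b (k + m) :=
          Finset.sum_le_sum (fun m _ => htail m)
      _ = 4*C*M * ∑ m ∈ Finset.range n, ∑' k, b (k + m) := by rw [Finset.mul_sum]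
      _ ≤ 4*C*M * ∑' k : ℕ, ((k : ℝ) + 1) * b k := by
          apply mul_le_mul_of_nonneg_left (key_tail_sum b (fun k => hφ0 _ 0) hs1 n)
          positivity
      _ = 4 * C * M * ∑' k : ℕ, ((k : ℝ) + 1) * φ (k + 1) 0 := rfl
  refine ⟨Sig2, ?_, ?_, ?_, fun n _ i j => hbnd n i j⟩
  · intro i j
    have hfun : (fun k : ℕ => |(∫ ω, X 1 ω i * X (k + 2) ω j ∂ν) + ∫ ω, X (k + 2) ω i * X 1 ω j ∂ν|)
        = fun k => |a' i j k| := funext fun k => by rw [hmatch i j k]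
    rw [hfun]
    exact hsumabs i j
  · intro i j
    have hc0 : c 0 i j = ∫ ω, X 1 ω i * X 1 ω j ∂ν := rfl
    have heq : Sig2 i j - (∫ ω, X 1 ω i * X 1 ω j ∂ν) = ∑' k, a' i j k := by
      rw [hS2app i j, hc0]; ring
    have hfun : (fun k : ℕ => (∫ ω, X 1 ω i * X (k + 2) ω j ∂ν) + ∫ ω, X (k + 2) ω i * X 1 ω j ∂ν)
        = a' i j := funext fun k => hmatch i j k
    rw [hfun, heq]
    exact (hsa i j).hasSum
  · intro i j
    set B : ℝ := 4 * C * M * ∑' k : ℕ, ((k : ℝ) + 1) * φ (k + 1) 0 with hBdef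
    have hz : Tendsto (fun n : ℕ => (∫ ω, Ssum X n ω i * Ssum X n ω j ∂ν) / n - Sig2 i j)
        atTop (nhds 0) := by
      apply squeeze_zero_norm' (a := fun n : ℕ => B / n)
      · filter_upwards [eventually_ge_atTop 1] with n hn
        have hn0 : (0:ℝ) < n := by exact_mod_cast hn
        have : (∫ ω, Ssum X n ω i * Ssum X n ω j ∂ν) / n - Sig2 i j
            = ((∫ ω, Ssum X n ω i * Ssum X n ω j ∂ν) - n * Sig2 i j) / n := by
          field_simp
        rw [Real.norm_eq_abs, this, abs_div, abs_of_pos hn0]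
        gcongr
        exact hbnd n i j
      · exact tendsto_const_div_atTop_nhds_zero_nat B
    have := hz.add_const (Sig2 i j)
    simpa using this
end

section
/- Let P, Q be probability measures on ℝ^d with finite first moments, let φ: ℝ^d → ℝ be Lipschitz with Lipschitz constant L_φ ≤ 1, and let M > 0. Then |∫ φ dQ − ∫ φ dP| ≤ 2·∫ (|x|_∞ − M)·1_{|x|_∞ > M} dP(x) + |∫ |x|_∞ dQ(x) − ∫ |x|_∞ dP(x)| + 2(M+1)·BL(Q, P). -/
open MeasureTheory Filter

/-- The bounded-Lipschitz distance between two probability measures on `ℝ^d`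
(with the sup norm), as the supremum of `|∫ ψ dP − ∫ ψ dQ|` over all `ψ` with
`‖ψ‖_∞ + L_ψ ≤ 1`. -/
noncomputable def BLdist {d : ℕ} (P Q : Measure (Fin d → ℝ)) : ℝ :=
  sSup {u : ℝ | ∃ (ψ : (Fin d → ℝ) → ℝ) (K : NNReal) (Cb : ℝ),
    LipschitzWith K ψ ∧ (∀ x, |ψ x| ≤ Cb) ∧ Cb + (K : ℝ) ≤ 1 ∧
    u = |(∫ x, ψ x ∂P) - ∫ x, ψ x ∂Q|}

lemma bl_mem_le {d : ℕ} (P Q : Measure (Fin d → ℝ)) [IsProbabilityMeasure P]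
    [IsProbabilityMeasure Q]
    (ψ : (Fin d → ℝ) → ℝ) (K : NNReal) (Cb : ℝ) (hψ : LipschitzWith K ψ)
    (hb : ∀ x, |ψ x| ≤ Cb) (hs : Cb + (K : ℝ) ≤ 1) :
    |(∫ x, ψ x ∂P) - ∫ x, ψ x ∂Q| ≤ BLdist P Q := by
  have hbdd : BddAbove {u : ℝ | ∃ (ψ : (Fin d → ℝ) → ℝ) (K : NNReal) (Cb : ℝ),
      LipschitzWith K ψ ∧ (∀ x, |ψ x| ≤ Cb) ∧ Cb + (K : ℝ) ≤ 1 ∧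
      u = |(∫ x, ψ x ∂P) - ∫ x, ψ x ∂Q|} := by
    refine ⟨2, ?_⟩
    rintro u ⟨ψ', K', Cb', _, hb', hs', rfl⟩
    have hCb1 : Cb' ≤ 1 := by
      have : (0 : ℝ) ≤ (K' : ℝ) := K'.coe_nonneg
      linarith
    have h1 : |∫ x, ψ' x ∂P| ≤ Cb' := by
      have := norm_integral_le_of_norm_le_const (μ := P) (f := ψ')
        (C := Cb') (Filter.Eventually.of_forall fun x => by
          simpa [Real.norm_eq_abs] using hb' x)
      simpa [Real.norm_eq_abs] using this
    have h2 : |∫ x, ψ' x ∂Q| ≤ Cb' := by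
      have := norm_integral_le_of_norm_le_const (μ := Q) (f := ψ')
        (C := Cb') (Filter.Eventually.of_forall fun x => by
          simpa [Real.norm_eq_abs] using hb' x)
      simpa [Real.norm_eq_abs] using this
    calc |(∫ x, ψ' x ∂P) - ∫ x, ψ' x ∂Q|
        ≤ |∫ x, ψ' x ∂P| + |∫ x, ψ' x ∂Q| := abs_sub _ _
      _ ≤ 2 := by linarith
  exact le_csSup hbdd ⟨ψ, K, Cb, hψ, hb, hs, rfl⟩

lemma scaled_bl {d : ℕ} (P Q : Measure (Fin d → ℝ)) [IsProbabilityMeasure P]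
    [IsProbabilityMeasure Q]
    (f : (Fin d → ℝ) → ℝ) (hf : LipschitzWith 1 f) (M : ℝ) (hM : 0 < M)
    (hb : ∀ x, |f x| ≤ M) :
    |(∫ x, f x ∂P) - ∫ x, f x ∂Q| ≤ (M + 1) * BLdist P Q := by
  set c : ℝ := (M + 1)⁻¹ with hc
  have hc0 : 0 < c := by positivity
  have hK : LipschitzWith ⟨c, hc0.le⟩ (fun x => c * f x) := by
    apply LipschitzWith.of_dist_le_mul
    intro x y
    have h1 := hf.dist_le_mul x y
    have : dist (c * f x) (c * f y) = c * dist (f x) (f y) := by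
      rw [Real.dist_eq, Real.dist_eq, ← mul_sub, abs_mul, abs_of_pos hc0]
    rw [this]
    calc c * dist (f x) (f y) ≤ c * dist x y := by
          have := hf.dist_le_mul x y
          have h2 : dist (f x) (f y) ≤ dist x y := by simpa using this
          exact mul_le_mul_of_nonneg_left h2 hc0.le
      _ = (⟨c, hc0.le⟩ : NNReal) * dist x y := by norm_num
  have hbc : ∀ x, |c * f x| ≤ M * c := by
    intro x
    rw [abs_mul, abs_of_pos hc0, mul_comm]
    exact mul_le_mul_of_nonneg_right (hb x) hc0.le
  have hsum : M * c + ((⟨c, hc0.le⟩ : NNReal) : ℝ) ≤ 1 := by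
    have : M * c + c = 1 := by
      field_simp [hc]
      rw [hc]; exact inv_mul_cancel₀ (by linarith)
    simp only [NNReal.coe_mk]
    linarith
  have key := bl_mem_le P Q (fun x => c * f x) ⟨c, hc0.le⟩ (M * c) hK hbc hsum
  rw [integral_const_mul, integral_const_mul, ← mul_sub, abs_mul, abs_of_pos hc0] at key
  have hM1 : 0 < M + 1 := by linarith
  calc |(∫ x, f x ∂P) - ∫ x, f x ∂Q|
      = (M + 1) * (c * |(∫ x, f x ∂P) - ∫ x, f x ∂Q|) := by
        field_simp [hc]
        rw [hc, mul_assoc, mul_inv_cancel₀ hM1.ne', mul_one]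
    _ ≤ (M + 1) * BLdist P Q := by
        exact mul_le_mul_of_nonneg_left key hM1.le

/-- For probability measures `P, Q` on `ℝ^d` with finite first
moments, `φ` 1-Lipschitz (for the sup norm) and `M > 0`,
`|∫ φ dQ − ∫ φ dP| ≤ 2 ∫ (|x|_∞ − M)⁺ dP + |∫|x|_∞ dQ − ∫|x|_∞ dP| + 2(M+1)·BL(Q,P)`. -/
theorem stmt3 {d : ℕ} (hd : 1 ≤ d)
    (P Q : Measure (Fin d → ℝ)) [IsProbabilityMeasure P] [IsProbabilityMeasure Q]
    (hP : Integrable (fun x => ‖x‖) P) (hQ : Integrable (fun x => ‖x‖) Q)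
    (φ : (Fin d → ℝ) → ℝ) (hφ : LipschitzWith 1 φ) (M : ℝ) (hM : 0 < M) :
    |(∫ x, φ x ∂Q) - ∫ x, φ x ∂P| ≤
      2 * (∫ x, max (‖x‖ - M) 0 ∂P)
      + |(∫ x, ‖x‖ ∂Q) - ∫ x, ‖x‖ ∂P|
      + 2 * (M + 1) * BLdist Q P := by
  -- center φ at 0
  set φ0 : (Fin d → ℝ) → ℝ := fun x => φ x - φ 0 with hφ0def
  have hφ0lip : LipschitzWith 1 φ0 := by
    apply LipschitzWith.of_dist_le_mul
    intro x y
    have := hφ.dist_le_mul x y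
    simpa [φ0, Real.dist_eq, sub_sub_sub_cancel_right] using this
  have hφ0bd : ∀ x, |φ0 x| ≤ ‖x‖ := by
    intro x
    have := hφ.dist_le_mul x 0
    simpa [φ0, Real.dist_eq, dist_eq_norm] using this
  -- integrability of φ0
  have hφ0meas : Continuous φ0 := hφ0lip.continuous
  have hφ0intP : Integrable φ0 P :=
    hP.mono' hφ0meas.aestronglyMeasurable
      (Filter.Eventually.of_forall fun x => by simpa [Real.norm_eq_abs] using hφ0bd x)
  have hφ0intQ : Integrable φ0 Q :=
    hQ.mono' hφ0meas.aestronglyMeasurable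
      (Filter.Eventually.of_forall fun x => by simpa [Real.norm_eq_abs] using hφ0bd x)
  -- reduce to φ0
  have hswap : ∀ (μ : Measure (Fin d → ℝ)) [IsProbabilityMeasure μ], Integrable φ0 μ →
      ∫ x, φ0 x ∂μ = (∫ x, φ x ∂μ) - φ 0 := by
    intro μ _ hint
    have hφint : Integrable φ μ := by
      have : Integrable (fun x => φ0 x + φ 0) μ := hint.add (integrable_const _)
      simpa [φ0] using this
    rw [show φ0 = fun x => φ x - φ 0 from rfl]
    rw [integral_sub hφint (integrable_const _), integral_const]
    simp
  have hred : (∫ x, φ x ∂Q) - ∫ x, φ x ∂P = (∫ x, φ0 x ∂Q) - ∫ x, φ0 x ∂P := by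
    rw [hswap Q hφ0intQ, hswap P hφ0intP]; ring
  -- clamped function g
  set g : (Fin d → ℝ) → ℝ := fun x => max (min (φ0 x) M) (-M) with hgdef
  have hglip : LipschitzWith 1 g := (hφ0lip.min_const M).max_const (-M)
  have hgbd : ∀ x, |g x| ≤ M := by
    intro x
    rw [abs_le]
    constructor
    · exact le_max_right _ _
    · exact max_le (min_le_right _ _) (by linarith)
  have hgintP : Integrable g P :=
    (integrable_const M).mono' hglip.continuous.aestronglyMeasurable
      (Filter.Eventually.of_forall fun x => by simpa [Real.norm_eq_abs] using hgbd x)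
  have hgintQ : Integrable g Q :=
    (integrable_const M).mono' hglip.continuous.aestronglyMeasurable
      (Filter.Eventually.of_forall fun x => by simpa [Real.norm_eq_abs] using hgbd x)
  -- difference bound
  have hdiff : ∀ x, |φ0 x - g x| ≤ max (‖x‖ - M) 0 := by
    intro x
    have hb := abs_le.mp (hφ0bd x)
    rcases le_total (φ0 x) M with h1 | h1
    · rcases le_total (-M) (φ0 x) with h2 | h2
      · have hg : g x = φ0 x := by
          simp [g, min_eq_left h1, max_eq_left h2]
        rw [hg]
        simpa using le_max_right (‖x‖ - M) 0
      · have hg : g x = -M := by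
          simp [g, min_eq_left h1, max_eq_right h2]
        rw [hg]
        refine le_trans ?_ (le_max_left _ _)
        rw [abs_le]
        constructor <;> linarith [hb.1, hb.2]
    · have hg : g x = M := by
        simp [g, min_eq_right h1, max_eq_left (by linarith : -M ≤ M)]
      rw [hg]
      refine le_trans ?_ (le_max_left _ _)
      rw [abs_le]
      constructor <;> linarith [hb.1, hb.2]
  -- truncated norm h
  set h : (Fin d → ℝ) → ℝ := fun x => min ‖x‖ M with hhdef
  have hhlip : LipschitzWith 1 h := lipschitzWith_one_norm.min_const M
  have hhbd : ∀ x, |h x| ≤ M := by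
    intro x
    rw [abs_le]
    constructor
    · have : (0:ℝ) ≤ h x := le_min (norm_nonneg x) hM.le
      linarith
    · exact min_le_right _ _
  have hhintP : Integrable h P :=
    (integrable_const M).mono' hhlip.continuous.aestronglyMeasurable
      (Filter.Eventually.of_forall fun x => by simpa [Real.norm_eq_abs] using hhbd x)
  have hhintQ : Integrable h Q :=
    (integrable_const M).mono' hhlip.continuous.aestronglyMeasurable
      (Filter.Eventually.of_forall fun x => by simpa [Real.norm_eq_abs] using hhbd x)
  -- key pointwise identity
  have hid : ∀ x : Fin d → ℝ, max (‖x‖ - M) 0 = ‖x‖ - h x := by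
    intro x
    rcases le_total ‖x‖ M with h1 | h1
    · simp [h, min_eq_left h1, max_eq_right (by linarith : ‖x‖ - M ≤ 0)]
    · simp [h, min_eq_right h1, max_eq_left (by linarith : (0:ℝ) ≤ ‖x‖ - M)]
  -- integrals of max (‖x‖ - M) 0
  have hmaxintP : Integrable (fun x => max (‖x‖ - M) 0) P := by
    have : (fun x : Fin d → ℝ => max (‖x‖ - M) 0) = fun x => ‖x‖ - h x := funext hid
    rw [this]; exact hP.sub hhintP
  have hmaxintQ : Integrable (fun x => max (‖x‖ - M) 0) Q := by
    have : (fun x : Fin d → ℝ => max (‖x‖ - M) 0) = fun x => ‖x‖ - h x := funext hid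
    rw [this]; exact hQ.sub hhintQ
  have heqP : ∫ x, max (‖x‖ - M) 0 ∂P = (∫ x, ‖x‖ ∂P) - ∫ x, h x ∂P := by
    rw [show (fun x : Fin d → ℝ => max (‖x‖ - M) 0) = fun x => ‖x‖ - h x from funext hid]
    exact integral_sub hP hhintP
  have heqQ : ∫ x, max (‖x‖ - M) 0 ∂Q = (∫ x, ‖x‖ ∂Q) - ∫ x, h x ∂Q := by
    rw [show (fun x : Fin d → ℝ => max (‖x‖ - M) 0) = fun x => ‖x‖ - h x from funext hid]
    exact integral_sub hQ hhintQ
  -- BL bounds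
  have hBLg : |(∫ x, g x ∂Q) - ∫ x, g x ∂P| ≤ (M + 1) * BLdist Q P :=
    scaled_bl Q P g hglip M hM hgbd
  have hBLh : |(∫ x, h x ∂Q) - ∫ x, h x ∂P| ≤ (M + 1) * BLdist Q P :=
    scaled_bl Q P h hhlip M hM hhbd
  -- truncation error bounds
  have htruncQ : |(∫ x, φ0 x ∂Q) - ∫ x, g x ∂Q| ≤ ∫ x, max (‖x‖ - M) 0 ∂Q := by
    rw [← integral_sub hφ0intQ hgintQ]
    calc |∫ x, φ0 x - g x ∂Q| ≤ ∫ x, |φ0 x - g x| ∂Q := by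
          simpa [Real.norm_eq_abs] using
            MeasureTheory.norm_integral_le_integral_norm (μ := Q) (fun x => φ0 x - g x)
      _ ≤ ∫ x, max (‖x‖ - M) 0 ∂Q :=
          integral_mono (hφ0intQ.sub hgintQ).abs hmaxintQ hdiff
  have htruncP : |(∫ x, φ0 x ∂P) - ∫ x, g x ∂P| ≤ ∫ x, max (‖x‖ - M) 0 ∂P := by
    rw [← integral_sub hφ0intP hgintP]
    calc |∫ x, φ0 x - g x ∂P| ≤ ∫ x, |φ0 x - g x| ∂P := by
          simpa [Real.norm_eq_abs] using
            MeasureTheory.norm_integral_le_integral_norm (μ := P) (fun x => φ0 x - g x)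
      _ ≤ ∫ x, max (‖x‖ - M) 0 ∂P :=
          integral_mono (hφ0intP.sub hgintP).abs hmaxintP hdiff
  -- bound T_Q by T_P + |Δ| + (M+1) BL
  have hTQ : ∫ x, max (‖x‖ - M) 0 ∂Q ≤ (∫ x, max (‖x‖ - M) 0 ∂P)
      + |(∫ x, ‖x‖ ∂Q) - ∫ x, ‖x‖ ∂P| + (M + 1) * BLdist Q P := by
    have h1 := le_abs_self ((∫ x, ‖x‖ ∂Q) - ∫ x, ‖x‖ ∂P)
    have h2 := neg_abs_le ((∫ x, h x ∂Q) - ∫ x, h x ∂P)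
    rw [heqQ, heqP]
    linarith [hBLh]
  -- assemble
  rw [hred]
  have htri : |(∫ x, φ0 x ∂Q) - ∫ x, φ0 x ∂P| ≤
      |(∫ x, φ0 x ∂Q) - ∫ x, g x ∂Q| + |(∫ x, g x ∂Q) - ∫ x, g x ∂P|
      + |(∫ x, g x ∂P) - ∫ x, φ0 x ∂P| := by
    calc |(∫ x, φ0 x ∂Q) - ∫ x, φ0 x ∂P|
        ≤ |(∫ x, φ0 x ∂Q) - ∫ x, g x ∂P| + |(∫ x, g x ∂P) - ∫ x, φ0 x ∂P| :=
          abs_sub_le _ _ _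
      _ ≤ |(∫ x, φ0 x ∂Q) - ∫ x, g x ∂Q| + |(∫ x, g x ∂Q) - ∫ x, g x ∂P|
          + |(∫ x, g x ∂P) - ∫ x, φ0 x ∂P| := by
          linarith [abs_sub_le (∫ x, φ0 x ∂Q) (∫ x, g x ∂Q) (∫ x, g x ∂P)]
  have habs : |(∫ x, g x ∂P) - ∫ x, φ0 x ∂P| = |(∫ x, φ0 x ∂P) - ∫ x, g x ∂P| :=
    abs_sub_comm _ _
  rw [habs] at htri
  linarith [htri, htruncQ, htruncP, hBLg, hTQ]
end

section
/- Assume a ∈ L^∞(Ω, ℝ^d) with ∫ a dν = 0, let B₁ be a random vector distributed as the centered Gaussian measure on ℝ^d with covariance matrix D(a), and suppose B > 0 is such that for every integer n ≥ 1 and every Lipschitz φ: ℝ^d → ℝ one has |E_ν̃[φ((1/√n)·∑_{k=0}^{n−1} a(X_k))] − E[φ(B₁)]| ≤ B·L_φ/√n. Then for every real ε > 0 and every Lipschitz function φ: ℝ^d → ℝ, sup_{s>0, x∈ℝ^d} |E_ν̃[φ(x + ε·∑_{k=0}^{⌊s/ε²⌋} a(X_k))] − E[φ(x + √s·B₁)]|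 ≤ ε·L_φ·(B + ‖a‖_{L¹(ν)} + E[|B₁|_∞]). -/
open MeasureTheory ProbabilityTheory Filter
open scoped ENNReal NNReal

/-- The σ-algebra `σ(X_m : m ≤ n)` on `Ω^ℤ` generated by the coordinates up to time `n`. -/
def pastFiltration (Ω : Type*) [m : MeasurableSpace Ω] (n : ℤ) :
    MeasurableSpace (ℤ → Ω) :=
  ⨆ i : ℤ, ⨆ _ : i ≤ n, MeasurableSpace.comap (fun ωt : ℤ → Ω => ωt i) m

/-- `ν'` is the law of the stationary Markov chain on `Ω^ℤ` with transition kernel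
`(1-α)·δ_{T(x)} + α·ν`. -/
def KnudsenChain {Ω : Type*} [MeasurableSpace Ω] (ν : Measure Ω) (T : Ω → Ω)
    (α : ℝ) (ν' : Measure (ℤ → Ω)) : Prop :=
  (∀ n : ℤ, Measure.map (fun ωt : ℤ → Ω => ωt n) ν' = ν) ∧
  (∀ n : ℤ, ∀ f : Ω → ℝ, Measurable f → (∃ Cf, ∀ x, |f x| ≤ Cf) →
    (ν'[(fun ωt : ℤ → Ω => f (ωt (n + 1))) | pastFiltration Ω n])
      =ᵐ[ν'] fun ωt => (1 - α) * f (T (ωt n)) + α * ∫ x, f x ∂ν)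

/-- The `ℤ`-indexed iterates of an invertible map `T` with inverse `Tinv`. -/
def iterZ {Ω : Type*} (T Tinv : Ω → Ω) : ℤ → Ω → Ω
  | Int.ofNat n => T^[n]
  | Int.negSucc n => Tinv^[n + 1]

/-- The asymptotic covariance matrix
`D(a) = ∑_{k ∈ ℤ} (1-α)^{|k|} E_ν[a ⊗ (a ∘ T^k)]`. -/
noncomputable def Dmat {Ω : Type*} [MeasurableSpace Ω] (ν : Measure Ω)
    (T Tinv : Ω → Ω) (α : ℝ) {d : ℕ} (a : Ω → Fin d → ℝ) :
    Matrix (Fin d) (Fin d) ℝ :=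
  Matrix.of fun i j =>
    ∑' k : ℤ, (1 - α) ^ k.natAbs * ∫ ω, a ω i * a (iterZ T Tinv k ω) j ∂ν



section Aux

open MeasureTheory Function Set

lemma map_eval_pi {ι : Type*} [Fintype ι] {β : ι → Type*} [∀ i, MeasurableSpace (β i)]
    (μ : ∀ i, Measure (β i)) [∀ i, IsProbabilityMeasure (μ i)] (i : ι) :
    Measure.map (Function.eval i) (Measure.pi μ) = μ i := by
  classical
  ext s hs
  rw [Measure.map_apply (measurable_pi_apply i) hs, Set.eval_preimage, Measure.pi_pi]
  rw [Finset.prod_eq_single i (fun j _ hj => by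
    rw [Function.update_of_ne hj]; exact measure_univ) (fun h => absurd (Finset.mem_univ i) h)]
  rw [Function.update_self]

lemma integrable_abs_gaussianReal : Integrable (fun x : ℝ => |x|) (gaussianReal 0 1) := by
  rw [gaussianReal_of_var_ne_zero 0 one_ne_zero]
  rw [integrable_withDensity_iff (measurable_gaussianPDF 0 1)
    (Filter.Eventually.of_forall fun x => ENNReal.ofReal_lt_top)]
  have h : ∀ x : ℝ, (gaussianPDF 0 1 x).toReal = gaussianPDFReal 0 1 x := fun x =>
    ENNReal.toReal_ofReal (gaussianPDFReal_nonneg 0 1 x)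
  simp only [h, gaussianPDFReal]
  have hint : Integrable (fun x : ℝ => x * Real.exp (-(2:ℝ)⁻¹ * x ^ 2)) :=
    integrable_mul_exp_neg_mul_sq (by norm_num)
  have := (hint.abs.const_mul ((Real.sqrt (2 * Real.pi * (1:ℝ≥0)))⁻¹))
  refine this.congr (Filter.Eventually.of_forall fun x => ?_)
  simp only [abs_mul, abs_of_nonneg (Real.exp_pos _).le]
  rw [show -(x - 0) ^ 2 / (2 * ((1:ℝ≥0):ℝ)) = -(2:ℝ)⁻¹ * x ^ 2 by push_cast; ring]
  ring

lemma integrable_norm_stdGaussian (d : ℕ) : Integrable (fun z => ‖z‖) (stdGaussian d) := by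
  have heval : ∀ i : Fin d, Integrable (fun z : Fin d → ℝ => |z i|) (stdGaussian d) := by
    intro i
    have hmap : Measure.map (Function.eval i) (stdGaussian d) = gaussianReal 0 1 :=
      map_eval_pi _ i
    have := integrable_abs_gaussianReal
    rw [← hmap] at this
    rw [show Function.eval i = (fun z : Fin d → ℝ => z i) from rfl] at this
    exact (integrable_map_measure continuous_abs.aestronglyMeasurable
      (measurable_pi_apply i).aemeasurable).1 this
  have hsum : Integrable (fun z : Fin d → ℝ => ∑ i, |z i|) (stdGaussian d) :=
    integrable_finset_sum _ fun i _ => heval i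
  refine hsum.mono' (by fun_prop) (Filter.Eventually.of_forall fun z => ?_)
  rw [Real.norm_eq_abs, abs_of_nonneg (norm_nonneg z)]
  rcases isEmpty_or_nonempty (Fin d) with h | h
  · rw [norm_eq_zero.2 (Subsingleton.elim z 0)]
    positivity
  · refine (pi_norm_le_iff_of_nonneg (Finset.sum_nonneg fun i _ => abs_nonneg _)).2 fun i => ?_
    exact Finset.single_le_sum (fun j _ => abs_nonneg (z j)) (Finset.mem_univ i)

lemma integrable_norm_gaussianCov {d : ℕ} {γ : Measure (Fin d → ℝ)}
    {S : Matrix (Fin d) (Fin d) ℝ} (hγ : IsCenteredGaussianCov γ S) :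
    Integrable (fun y => ‖y‖) γ := by
  obtain ⟨A, -, rfl⟩ := hγ
  have hA : Measurable (fun z : Fin d → ℝ => A.mulVec z) :=
    (Matrix.mulVecLin A).continuous_of_finiteDimensional.measurable
  rw [integrable_map_measure (continuous_norm.aestronglyMeasurable) hA.aemeasurable]
  set L := (Matrix.mulVecLin A).toContinuousLinearMap with hL
  have hb : ∀ z : Fin d → ℝ, ‖A.mulVec z‖ ≤ ‖L‖ * ‖z‖ := fun z => L.le_opNorm z
  refine ((integrable_norm_stdGaussian d).const_mul ‖L‖).mono'
    ((continuous_norm.comp (Matrix.mulVecLin A).continuous_of_finiteDimensional).aestronglyMeasurable)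
    (Filter.Eventually.of_forall fun z => ?_)
  simpa [Function.comp, Real.norm_eq_abs, abs_of_nonneg (norm_nonneg _)] using hb z

end Aux

set_option maxHeartbeats 1000000 in
/-- Diffusive-limit consequence of the Kantorovich rate: for every
`ε > 0`, every Lipschitz `φ`, uniformly in `s > 0` and `x ∈ ℝ^d`,
`|E[φ(x + ε ∑_{k=0}^{⌊s/ε²⌋} a(X_k))] − E[φ(x + √s B₁)]| ≤ ε L_φ (B + ‖a‖_{L¹} + E|B₁|_∞)`. -/
theorem stmt6 {Ω : Type*} [MeasurableSpace Ω] (ν : Measure Ω) [IsProbabilityMeasure ν]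
    (T Tinv : Ω → Ω) (hT : MeasurePreserving T ν ν) (hTinv : Measurable Tinv)
    (hinv1 : Function.LeftInverse Tinv T) (hinv2 : Function.RightInverse Tinv T)
    (α : ℝ) (hα0 : 0 < α) (hα1 : α < 1)
    (ν' : Measure (ℤ → Ω)) [IsProbabilityMeasure ν'] (hchain : KnudsenChain ν T α ν')
    (d : ℕ) (hd : 1 ≤ d) (a : Ω → Fin d → ℝ) (hameas : Measurable a)
    (hacent : ∫ ω, a ω ∂ν = 0) (habdd : MemLp a ⊤ ν)
    (γ : Measure (Fin d → ℝ)) (hγ : IsCenteredGaussianCov γ (Dmat ν T Tinv α a))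
    (B : ℝ) (hB : 0 < B)
    (hrate : ∀ n : ℕ, 1 ≤ n →
      ∀ (φ : (Fin d → ℝ) → ℝ) (K : ℝ≥0), LipschitzWith K φ →
        |(∫ ωt, φ ((Real.sqrt n)⁻¹ • ∑ k ∈ Finset.range n, a (ωt (k : ℤ))) ∂ν')
            - ∫ y, φ y ∂γ|
          ≤ B * K / Real.sqrt n) :
    ∀ ε : ℝ, 0 < ε → ∀ (φ : (Fin d → ℝ) → ℝ) (K : ℝ≥0), LipschitzWith K φ →
      ∀ s : ℝ, 0 < s → ∀ x : Fin d → ℝ,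
        |(∫ ωt, φ (x + ε • ∑ k ∈ Finset.range (⌊s / ε ^ 2⌋₊ + 1), a (ωt (k : ℤ))) ∂ν')
            - ∫ y, φ (x + Real.sqrt s • y) ∂γ|
          ≤ ε * K * (B + (∫ ω, ‖a ω‖ ∂ν) + ∫ y, ‖y‖ ∂γ) := by
  intro ε hε φ K hφ s hs x
  set n : ℕ := ⌊s / ε ^ 2⌋₊ + 1 with hn
  have hn1 : 1 ≤ n := Nat.le_add_left 1 _
  have hnpos : (0:ℝ) < n := by exact_mod_cast Nat.lt_of_lt_of_le Nat.zero_lt_one hn1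
  have hsq : 0 < Real.sqrt n := Real.sqrt_pos.2 hnpos
  set c : ℝ := ε * Real.sqrt n with hc
  have hcpos : 0 < c := by positivity
  set ψ : (Fin d → ℝ) → ℝ := fun y => φ (x + c • y) with hψ
  have hψlip : LipschitzWith (K * ‖c‖₊) ψ := by
    refine LipschitzWith.of_dist_le_mul fun y₁ y₂ => ?_
    calc dist (ψ y₁) (ψ y₂) ≤ K * dist (x + c • y₁) (x + c • y₂) := hφ.dist_le_mul _ _
      _ = ((K * ‖c‖₊ : ℝ≥0) : ℝ) * dist y₁ y₂ := by
          rw [dist_add_left, dist_smul₀]; push_cast; ring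
  -- Step 1 : CLT rate applied to ψ
  have h1 : |(∫ ωt, φ (x + ε • ∑ k ∈ Finset.range n, a (ωt (k : ℤ))) ∂ν')
      - ∫ y, ψ y ∂γ| ≤ ε * K * B := by
    have hr := hrate n hn1 ψ (K * ‖c‖₊) hψlip
    have hre : ∀ v : Fin d → ℝ, ψ ((Real.sqrt n)⁻¹ • v) = φ (x + ε • v) := by
      intro v
      simp only [hψ, smul_smul]
      congr 2
      rw [hc]
      field_simp
    simp only [hre] at hr
    have hbound : B * ((K * ‖c‖₊ : ℝ≥0) : ℝ) / Real.sqrt n = ε * K * B := by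
      rw [NNReal.coe_mul, coe_nnnorm, Real.norm_eq_abs, abs_of_pos hcpos, hc]
      field_simp
    rw [hbound] at hr
    exact hr
  -- probability and integrability facts on γ
  haveI hγprob : IsProbabilityMeasure γ := by
    obtain ⟨A, -, hAe⟩ := hγ
    have hstd : IsProbabilityMeasure (stdGaussian d) := by
      unfold _root_.stdGaussian; infer_instance
    rw [hAe]
    exact Measure.isProbabilityMeasure_map
      (Matrix.mulVecLin A).continuous_of_finiteDimensional.measurable.aemeasurable
  have hMint : Integrable (fun y => ‖y‖) γ := integrable_norm_gaussianCov hγ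
  have hint : ∀ t : ℝ, Integrable (fun y : Fin d → ℝ => φ (x + t • y)) γ := by
    intro t
    refine ((hMint.const_mul ((K : ℝ) * |t|)).add (integrable_const |φ x|)).mono'
      ((hφ.continuous.comp (by continuity)).aestronglyMeasurable)
      (Filter.Eventually.of_forall fun y => ?_)
    rw [Real.norm_eq_abs]
    have hdd : |φ (x + t • y) - φ x| ≤ (K : ℝ) * |t| * ‖y‖ := by
      have := hφ.dist_le_mul (x + t • y) x
      rw [Real.dist_eq] at this
      refine this.trans ?_
      rw [dist_eq_norm, add_sub_cancel_left, norm_smul, Real.norm_eq_abs, mul_assoc]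
    calc |φ (x + t • y)| ≤ |φ (x + t • y) - φ x| + |φ x| := by
          simpa using abs_add_le (φ (x + t • y) - φ x) (φ x)
      _ ≤ (K : ℝ) * |t| * ‖y‖ + |φ x| := add_le_add_left hdd _
  -- |c - √s| ≤ ε
  have hfl : (⌊s / ε ^ 2⌋₊ : ℝ) ≤ s / ε ^ 2 := Nat.floor_le (by positivity)
  have hlt : s / ε ^ 2 < (n : ℝ) := by
    have := Nat.lt_floor_add_one (s / ε ^ 2)
    rw [hn]; push_cast; exact_mod_cast this
  have hc2 : c ^ 2 = ε ^ 2 * n := by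
    rw [hc, mul_pow, Real.sq_sqrt hnpos.le]
  have hslec2 : s ≤ c ^ 2 := by
    rw [hc2]
    have h2' : s / ε ^ 2 * ε ^ 2 ≤ (n : ℝ) * ε ^ 2 :=
      mul_le_mul_of_nonneg_right hlt.le (sq_nonneg ε)
    rw [div_mul_cancel₀ _ (by positivity : (ε:ℝ) ^ 2 ≠ 0)] at h2'
    linarith [h2']
  have hcast : (n : ℝ) = (⌊s / ε ^ 2⌋₊ : ℝ) + 1 := by rw [hn]; push_cast; ring
  have hc2le : c ^ 2 ≤ s + ε ^ 2 := by
    rw [hc2]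
    have h3 : (n : ℝ) ≤ s / ε ^ 2 + 1 := by rw [hcast]; linarith [hfl]
    calc ε ^ 2 * (n : ℝ) ≤ ε ^ 2 * (s / ε ^ 2 + 1) :=
          mul_le_mul_of_nonneg_left h3 (sq_nonneg ε)
      _ = s + ε ^ 2 := by field_simp
  have hsc : Real.sqrt s ≤ c := by
    have := Real.sqrt_le_sqrt hslec2
    rwa [Real.sqrt_sq hcpos.le] at this
  have hcse : c - Real.sqrt s ≤ ε := by
    by_contra hcon
    push_neg at hcon
    have h1' : Real.sqrt s + ε < c := by linarith
    have h2' : (Real.sqrt s + ε) ^ 2 < c ^ 2 :=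
      pow_lt_pow_left₀ h1' (by positivity) (by norm_num)
    have h3' : (Real.sqrt s + ε) ^ 2 = s + 2 * ε * Real.sqrt s + ε ^ 2 := by
      rw [add_sq, Real.sq_sqrt hs.le]; ring
    rw [h3'] at h2'
    have h4' := mul_nonneg hε.le (Real.sqrt_nonneg s)
    linarith
  -- Step 2 : comparing the two Gaussian integrals
  have h2 : |(∫ y, ψ y ∂γ) - ∫ y, φ (x + Real.sqrt s • y) ∂γ|
      ≤ ε * K * ∫ y, ‖y‖ ∂γ := by
    rw [← integral_sub (hint c) (hint (Real.sqrt s)), ← Real.norm_eq_abs]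
    calc ‖∫ y, (φ (x + c • y) - φ (x + Real.sqrt s • y)) ∂γ‖
        ≤ ∫ y, ((K : ℝ) * ε) * ‖y‖ ∂γ := by
          refine norm_integral_le_of_norm_le (hMint.const_mul _)
            (Filter.Eventually.of_forall fun y => ?_)
          rw [Real.norm_eq_abs]
          have := hφ.dist_le_mul (x + c • y) (x + Real.sqrt s • y)
          rw [Real.dist_eq] at this
          refine this.trans ?_
          rw [dist_eq_norm, show x + c • y - (x + Real.sqrt s • y) = (c - Real.sqrt s) • y by
            module, norm_smul, Real.norm_eq_abs,
            abs_of_nonneg (sub_nonneg.2 hsc)]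
          have hK0 : (0:ℝ) ≤ K := K.coe_nonneg
          nlinarith [mul_nonneg (mul_nonneg hK0 (norm_nonneg y)) (sub_nonneg.2 hcse),
            norm_nonneg y]
      _ = ε * K * ∫ y, ‖y‖ ∂γ := by rw [integral_const_mul]; ring
  have hL : 0 ≤ ∫ ω, ‖a ω‖ ∂ν := integral_nonneg fun ω => norm_nonneg _
  have hM : 0 ≤ ∫ y, ‖y‖ ∂γ := integral_nonneg fun y => norm_nonneg _
  calc |(∫ ωt, φ (x + ε • ∑ k ∈ Finset.range n, a (ωt (k : ℤ))) ∂ν')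
        - ∫ y, φ (x + Real.sqrt s • y) ∂γ|
      ≤ |(∫ ωt, φ (x + ε • ∑ k ∈ Finset.range n, a (ωt (k : ℤ))) ∂ν') - ∫ y, ψ y ∂γ|
        + |(∫ y, ψ y ∂γ) - ∫ y, φ (x + Real.sqrt s • y) ∂γ| := abs_sub_le _ _ _
    _ ≤ ε * K * B + ε * K * ∫ y, ‖y‖ ∂γ := add_le_add h1 h2
    _ ≤ ε * K * (B + (∫ ω, ‖a ω‖ ∂ν) + ∫ y, ‖y‖ ∂γ) := by
        nlinarith [mul_nonneg (mul_nonneg hε.le K.coe_nonneg) hL]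
end

section
/- Let a ∈ L²(Ω, ℝ^d) with ∫ a dν = 0. Then for every integer k ≥ 0, E_ν̃[a(X_0) ⊗ a(X_k)] = (1−α)^k·E_ν[a ⊗ (a∘T^k)]. Moreover the limit D(a) := lim_{n→∞} (1/n)·E_ν̃[(∑_{k=0}^{n−1} a(X_k)) ⊗ (∑_{k=0}^{n−1} a(X_k))] exists and equals ∑_{k∈ℤ} (1−α)^{|k|}·E_ν[a ⊗ (a∘T^k)]. -/
open MeasureTheory ProbabilityTheory Filter
open scoped ENNReal NNReal

section AuxLemmas

open Finset

variable {Ω : Type*} [MeasurableSpace Ω] {ν : Measure Ω} [IsProbabilityMeasure ν]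
  {T Tinv : Ω → Ω} {α : ℝ} {ν' : Measure (ℤ → Ω)} [IsProbabilityMeasure ν']

lemma pastFiltration_le (n : ℤ) :
    pastFiltration Ω n ≤ (inferInstance : MeasurableSpace (ℤ → Ω)) :=
  iSup₂_le fun i _ => (measurable_pi_apply i).comap_le

lemma measurable_eval_past {m' n : ℤ} (h : m' ≤ n) :
    Measurable[pastFiltration Ω n] (fun ωt : ℤ → Ω => ωt m') :=
  Measurable.of_comap_le (le_iSup₂ (f := fun i (_ : i ≤ n) =>
    MeasurableSpace.comap (fun ωt : ℤ → Ω => ωt i) ‹MeasurableSpace Ω›) m' h)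

lemma integrable_of_bdd {β : Type*} [MeasurableSpace β] {μ : Measure β} [IsProbabilityMeasure μ]
    {F : β → ℝ} (hF : AEStronglyMeasurable F μ) {C : ℝ} (hC : ∀ x, |F x| ≤ C) :
    Integrable F μ :=
  (integrable_const C).mono' hF (Filter.Eventually.of_forall fun x => by
    simpa [Real.norm_eq_abs] using hC x)

lemma integral_eval {n : ℤ} (hm : Measure.map (fun ωt : ℤ → Ω => ωt n) ν' = ν) {h : Ω → ℝ}
    (hh : AEStronglyMeasurable h ν) :
    ∫ ωt, h (ωt n) ∂ν' = ∫ x, h x ∂ν := by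
  rw [← hm] at hh ⊢
  exact (integral_map (measurable_pi_apply n).aemeasurable hh).symm

lemma integral_comp_mp {S : Ω → Ω} (hS : MeasurePreserving S ν ν) {h : Ω → ℝ}
    (hh : AEStronglyMeasurable h ν) :
    ∫ x, h (S x) ∂ν = ∫ x, h x ∂ν := by
  conv_rhs => rw [← hS.map_eq]
  exact (integral_map hS.measurable.aemeasurable (by rwa [hS.map_eq])).symm

lemma memL2_eval {n : ℤ} (hm : Measure.map (fun ωt : ℤ → Ω => ωt n) ν' = ν) {h : Ω → ℝ}
    (hmeas : Measurable h) (hh : MemLp h 2 ν) :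
    MemLp (fun ωt : ℤ → Ω => h (ωt n)) 2 ν' := by
  rw [← hm] at hh
  exact (memLp_map_measure_iff hmeas.aestronglyMeasurable
    (measurable_pi_apply n).aemeasurable).1 hh

lemma memL2_comp_mp {S : Ω → Ω} (hS : MeasurePreserving S ν ν) {h : Ω → ℝ}
    (hmeas : Measurable h) (hh : MemLp h 2 ν) :
    MemLp (fun x => h (S x)) 2 ν := by
  rw [← hS.map_eq] at hh
  exact (memLp_map_measure_iff hmeas.aestronglyMeasurable
    hS.measurable.aemeasurable).1 hh

lemma integrable_mul_l2 {β : Type*} [MeasurableSpace β] {μ : Measure β} {f g : β → ℝ}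
    (hf : MemLp f 2 μ) (hg : MemLp g 2 μ) : Integrable (fun x => f x * g x) μ := by
  have h : MemLp (f • g) 1 μ := hg.smul hf
  exact memLp_one_iff_integrable.mp h

/-- One step of the Knudsen chain. -/
lemma knudsen_step (hchain : KnudsenChain ν T α ν') (hTmeas : Measurable T)
    {f g : Ω → ℝ} (hf : Measurable f) (hg : Measurable g)
    {Cf Cg : ℝ} (hfb : ∀ x, |f x| ≤ Cf) (hgb : ∀ x, |g x| ≤ Cg)
    {m n : ℤ} (hmn : m ≤ n) :
    ∫ ωt, f (ωt m) * g (ωt (n + 1)) ∂ν'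
      = (1 - α) * ∫ ωt, f (ωt m) * g (T (ωt n)) ∂ν'
        + (α * ∫ x, g x ∂ν) * ∫ x, f x ∂ν := by
  have hle := pastFiltration_le (Ω := Ω) n
  have hFm : StronglyMeasurable[pastFiltration Ω n] (fun ωt : ℤ → Ω => f (ωt m)) :=
    (hf.comp (measurable_eval_past hmn)).stronglyMeasurable
  have hFmeas : Measurable (fun ωt : ℤ → Ω => f (ωt m)) := hf.comp (measurable_pi_apply m)
  have hGmeas : Measurable (fun ωt : ℤ → Ω => g (ωt (n + 1))) :=
    hg.comp (measurable_pi_apply (n + 1))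
  have hGint : Integrable (fun ωt : ℤ → Ω => g (ωt (n + 1))) ν' :=
    integrable_of_bdd hGmeas.aestronglyMeasurable (fun x => hgb _)
  have hFGint : Integrable ((fun ωt : ℤ → Ω => f (ωt m)) * (fun ωt : ℤ → Ω => g (ωt (n + 1)))) ν' := by
    refine integrable_of_bdd (C := |Cf| * |Cg|) (hFmeas.mul hGmeas).aestronglyMeasurable
      fun x => ?_
    rw [Pi.mul_apply, abs_mul]
    exact mul_le_mul ((hfb _).trans (le_abs_self _)) ((hgb _).trans (le_abs_self _))
      (abs_nonneg _) (abs_nonneg _)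
  have hcond := hchain.2 n g hg ⟨Cg, hgb⟩
  have hpull := condExp_mul_of_stronglyMeasurable_left (μ := ν') hFm hFGint hGint
  have h1 : ∫ ωt, f (ωt m) * g (ωt (n + 1)) ∂ν'
      = ∫ ωt, f (ωt m) *
        ((ν'[(fun ωt : ℤ → Ω => g (ωt (n + 1))) | pastFiltration Ω n]) ωt) ∂ν' := by
    calc ∫ ωt, f (ωt m) * g (ωt (n + 1)) ∂ν'
        = ∫ ωt, ((fun ωt : ℤ → Ω => f (ωt m)) * (fun ωt : ℤ → Ω => g (ωt (n + 1)))) ωt ∂ν' := rfl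
      _ = ∫ ωt, (ν'[(fun ωt : ℤ → Ω => f (ωt m)) * (fun ωt : ℤ → Ω => g (ωt (n + 1))) |
            pastFiltration Ω n]) ωt ∂ν' := (integral_condExp hle).symm
      _ = ∫ ωt, ((fun ωt : ℤ → Ω => f (ωt m)) *
            (ν'[(fun ωt : ℤ → Ω => g (ωt (n + 1))) | pastFiltration Ω n])) ωt ∂ν' :=
          integral_congr_ae hpull
      _ = _ := rfl
  have h2 : ∫ ωt, f (ωt m) *
        ((ν'[(fun ωt : ℤ → Ω => g (ωt (n + 1))) | pastFiltration Ω n]) ωt) ∂ν'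
      = ∫ ωt, f (ωt m) * ((1 - α) * g (T (ωt n)) + α * ∫ x, g x ∂ν) ∂ν' :=
    integral_congr_ae (hcond.mono fun x hx => by simp only [hx])
  have hI1 : Integrable (fun ωt : ℤ → Ω => f (ωt m) * g (T (ωt n))) ν' := by
    refine integrable_of_bdd (C := |Cf| * |Cg|)
      ((hFmeas.mul ((hg.comp hTmeas).comp (measurable_pi_apply n))).aestronglyMeasurable)
      fun x => ?_
    rw [abs_mul]
    exact mul_le_mul ((hfb _).trans (le_abs_self _)) ((hgb _).trans (le_abs_self _))
      (abs_nonneg _) (abs_nonneg _)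
  have hI2 : Integrable (fun ωt : ℤ → Ω => f (ωt m)) ν' :=
    integrable_of_bdd hFmeas.aestronglyMeasurable (fun x => hfb _)
  have h3 : ∫ ωt, f (ωt m) * ((1 - α) * g (T (ωt n)) + α * ∫ x, g x ∂ν) ∂ν'
      = (1 - α) * ∫ ωt, f (ωt m) * g (T (ωt n)) ∂ν'
        + (α * ∫ x, g x ∂ν) * ∫ ωt, f (ωt m) ∂ν' := by
    calc ∫ ωt, f (ωt m) * ((1 - α) * g (T (ωt n)) + α * ∫ x, g x ∂ν) ∂ν'
        = ∫ ωt, ((1 - α) * (f (ωt m) * g (T (ωt n))) + (α * ∫ x, g x ∂ν) * f (ωt m)) ∂ν' := by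
          congr 1; funext ωt; ring
      _ = _ := by
          rw [integral_add (hI1.const_mul _) (hI2.const_mul _), integral_const_mul,
            integral_const_mul]
  rw [h1, h2, h3, integral_eval (hchain.1 m) hf.aestronglyMeasurable]

/-- Multi-step correlation for bounded functions. -/
lemma knudsen_corr_bdd (hchain : KnudsenChain ν T α ν') (hT : MeasurePreserving T ν ν)
    {f : Ω → ℝ} (hf : Measurable f) {Cf : ℝ} (hfb : ∀ x, |f x| ≤ Cf) :
    ∀ (k : ℕ) (g : Ω → ℝ), Measurable g → ∀ (Cg : ℝ), (∀ x, |g x| ≤ Cg) → ∀ m : ℤ,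
    ∫ ωt, f (ωt m) * g (ωt (m + k)) ∂ν'
      = (1 - α) ^ k * ∫ x, f x * g (T^[k] x) ∂ν
        + (1 - (1 - α) ^ k) * ((∫ x, f x ∂ν) * ∫ x, g x ∂ν) := by
  intro k
  induction k with
  | zero =>
    intro g hg Cg hgb m
    simp only [Nat.cast_zero, add_zero, pow_zero, Function.iterate_zero, id_eq, sub_self,
      zero_mul, one_mul]
    exact integral_eval (hchain.1 m) ((hf.mul hg).aestronglyMeasurable)
  | succ k ih =>
    intro g hg Cg hgb m
    have hcast : (m + ((k : ℕ) + 1 : ℕ) : ℤ) = (m + (k : ℕ)) + 1 := by push_cast; ring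
    have hstep := knudsen_step hchain hT.measurable hf hg hfb hgb
      (m := m) (n := m + (k : ℕ)) (le_add_of_nonneg_right (by positivity))
    have ihg : ∫ ωt, f (ωt m) * g (T (ωt (m + (k : ℕ)))) ∂ν'
        = (1 - α) ^ k * ∫ x, f x * g (T (T^[k] x)) ∂ν
          + (1 - (1 - α) ^ k) * ((∫ x, f x ∂ν) * ∫ x, g (T x) ∂ν) :=
      ih (fun x => g (T x)) (hg.comp hT.measurable) Cg (fun x => hgb _) m
    have hTg : ∫ x, g (T x) ∂ν = ∫ x, g x ∂ν :=
      integral_comp_mp hT hg.aestronglyMeasurable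
    rw [hcast, hstep, ihg, hTg]
    simp only [Function.iterate_succ_apply']
    ring

/-- clamping of a real number to `[-N, N]`. -/
noncomputable def clampN (N : ℕ) (t : ℝ) : ℝ := max (-(N : ℝ)) (min (N : ℝ) t)

lemma clampN_abs_le_nat (N : ℕ) (t : ℝ) : |clampN N t| ≤ (N : ℝ) := by
  have h0 : (0 : ℝ) ≤ N := Nat.cast_nonneg N
  rw [clampN, abs_le]
  exact ⟨le_max_left _ _, max_le (by linarith) (min_le_left _ _)⟩

lemma clampN_abs_le (N : ℕ) (t : ℝ) : |clampN N t| ≤ |t| := by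
  have h0 : (0 : ℝ) ≤ N := Nat.cast_nonneg N
  rw [clampN, abs_le]
  constructor
  · exact le_max_of_le_right (le_min (by linarith [abs_nonneg t]) (neg_abs_le t))
  · exact max_le (by linarith [abs_nonneg t]) ((min_le_right _ _).trans (le_abs_self t))

lemma clampN_tendsto (t : ℝ) : Filter.Tendsto (fun N : ℕ => clampN N t) atTop (nhds t) := by
  have h : ∀ᶠ N : ℕ in atTop, clampN N t = t := by
    filter_upwards [Filter.eventually_ge_atTop ⌈|t|⌉₊] with N hN
    have h1 : |t| ≤ (N : ℝ) := (Nat.le_ceil _).trans (by exact_mod_cast hN)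
    rw [abs_le] at h1
    rw [clampN, min_eq_right h1.2, max_eq_right h1.1]
  exact Filter.Tendsto.congr' (Filter.EventuallyEq.symm h) tendsto_const_nhds

lemma clampN_measurable {h : Ω → ℝ} (hh : Measurable h) (N : ℕ) :
    Measurable fun x => clampN N (h x) :=
  measurable_const.max (measurable_const.min hh)

/-- Multi-step correlation for centered `L²` functions. -/
lemma knudsen_corr_l2 (hchain : KnudsenChain ν T α ν') (hT : MeasurePreserving T ν ν)
    {u v : Ω → ℝ} (hu : Measurable u) (hv : Measurable v)
    (hu2 : MemLp u 2 ν) (hv2 : MemLp v 2 ν)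
    (hu0 : ∫ x, u x ∂ν = 0) (hv0 : ∫ x, v x ∂ν = 0) (m : ℤ) (k : ℕ) :
    ∫ ωt, u (ωt m) * v (ωt (m + k)) ∂ν' = (1 - α) ^ k * ∫ x, u x * v (T^[k] x) ∂ν := by
  have hvk : MemLp (fun x => v (T^[k] x)) 2 ν :=
    memL2_comp_mp (hT.iterate k) hv hv2
  have hvkmeas : Measurable fun x => v (T^[k] x) := hv.comp (hT.measurable.iterate k)
  -- LHS limit
  have hLHS : Filter.Tendsto
      (fun N : ℕ => ∫ ωt, clampN N (u (ωt m)) * clampN N (v (ωt (m + k))) ∂ν')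
      atTop (nhds (∫ ωt, u (ωt m) * v (ωt (m + k)) ∂ν')) := by
    have hbint : Integrable (fun ωt : ℤ → Ω => |u (ωt m)| * |v (ωt (m + k))|) ν' := by
      have h := (integrable_mul_l2 (memL2_eval (hchain.1 m) hu hu2)
        (memL2_eval (hchain.1 (m + k)) hv hv2)).abs
      exact h.congr (Filter.Eventually.of_forall fun x => abs_mul _ _)
    refine tendsto_integral_of_dominated_convergence _ ?_ hbint ?_ ?_
    · intro N
      exact ((clampN_measurable (hu.comp (measurable_pi_apply m)) N).mul
        (clampN_measurable (hv.comp (measurable_pi_apply (m + k))) N)).aestronglyMeasurable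
    · intro N
      refine Filter.Eventually.of_forall fun ωt => ?_
      rw [Real.norm_eq_abs, abs_mul]
      exact mul_le_mul (clampN_abs_le _ _) (clampN_abs_le _ _) (abs_nonneg _) (abs_nonneg _)
    · exact Filter.Eventually.of_forall fun ωt =>
        (clampN_tendsto _).mul (clampN_tendsto _)
  -- RHS pieces
  have hA : Filter.Tendsto (fun N : ℕ => ∫ x, clampN N (u x) * clampN N (v (T^[k] x)) ∂ν)
      atTop (nhds (∫ x, u x * v (T^[k] x) ∂ν)) := by
    have hbint : Integrable (fun x => |u x| * |v (T^[k] x)|) ν := by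
      have h := (integrable_mul_l2 hu2 hvk).abs
      exact h.congr (Filter.Eventually.of_forall fun x => abs_mul _ _)
    refine tendsto_integral_of_dominated_convergence _ ?_ hbint ?_ ?_
    · intro N
      exact ((clampN_measurable hu N).mul (clampN_measurable hvkmeas N)).aestronglyMeasurable
    · intro N
      refine Filter.Eventually.of_forall fun x => ?_
      rw [Real.norm_eq_abs, abs_mul]
      exact mul_le_mul (clampN_abs_le _ _) (clampN_abs_le _ _) (abs_nonneg _) (abs_nonneg _)
    · exact Filter.Eventually.of_forall fun x => (clampN_tendsto _).mul (clampN_tendsto _)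
  have hB : Filter.Tendsto (fun N : ℕ => ∫ x, clampN N (u x) ∂ν) atTop (nhds 0) := by
    rw [← hu0]
    refine tendsto_integral_of_dominated_convergence (fun x => |u x|) ?_ ?_ ?_ ?_
    · intro N; exact (clampN_measurable hu N).aestronglyMeasurable
    · exact (memLp_one_iff_integrable.mp (hu2.mono_exponent one_le_two)).abs
    · intro N
      exact Filter.Eventually.of_forall fun x => by
        rw [Real.norm_eq_abs]; exact clampN_abs_le _ _
    · exact Filter.Eventually.of_forall fun x => clampN_tendsto _
  have hC : Filter.Tendsto (fun N : ℕ => ∫ x, clampN N (v x) ∂ν) atTop (nhds 0) := by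
    rw [← hv0]
    refine tendsto_integral_of_dominated_convergence (fun x => |v x|) ?_ ?_ ?_ ?_
    · intro N; exact (clampN_measurable hv N).aestronglyMeasurable
    · exact (memLp_one_iff_integrable.mp (hv2.mono_exponent one_le_two)).abs
    · intro N
      exact Filter.Eventually.of_forall fun x => by
        rw [Real.norm_eq_abs]; exact clampN_abs_le _ _
    · exact Filter.Eventually.of_forall fun x => clampN_tendsto _
  have hEq : ∀ N : ℕ, ∫ ωt, clampN N (u (ωt m)) * clampN N (v (ωt (m + k))) ∂ν'
      = (1 - α) ^ k * ∫ x, clampN N (u x) * clampN N (v (T^[k] x)) ∂ν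
        + (1 - (1 - α) ^ k) * ((∫ x, clampN N (u x) ∂ν) * ∫ x, clampN N (v x) ∂ν) := by
    intro N
    exact knudsen_corr_bdd hchain hT (clampN_measurable hu N) (clampN_abs_le_nat N <| u ·)
      k (fun x => clampN N (v x)) (clampN_measurable hv N) (N : ℝ)
      (clampN_abs_le_nat N <| v ·) m
  have hRHS : Filter.Tendsto
      (fun N : ℕ => ∫ ωt, clampN N (u (ωt m)) * clampN N (v (ωt (m + k))) ∂ν')
      atTop (nhds ((1 - α) ^ k * ∫ x, u x * v (T^[k] x) ∂ν)) := by
    have h := (hA.const_mul ((1 - α) ^ k)).add ((hB.mul hC).const_mul (1 - (1 - α) ^ k))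
    simp only [mul_zero, zero_mul, add_zero] at h
    exact Filter.Tendsto.congr (fun N => (hEq N).symm) h
  exact tendsto_nhds_unique hLHS hRHS

end AuxLemmas

/-- Summand of `Dmat`. -/
noncomputable def rfun {Ω : Type*} [MeasurableSpace Ω] (ν : Measure Ω) (T Tinv : Ω → Ω)
    (α : ℝ) {d : ℕ} (a : Ω → Fin d → ℝ) (i j : Fin d) (mm : ℤ) : ℝ :=
  (1 - α) ^ mm.natAbs * ∫ x, a x i * a (iterZ T Tinv mm x) j ∂ν

lemma Dmat_eq_tsum_rfun {Ω : Type*} [MeasurableSpace Ω] (ν : Measure Ω) (T Tinv : Ω → Ω)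
    (α : ℝ) {d : ℕ} (a : Ω → Fin d → ℝ) (i j : Fin d) :
    Dmat ν T Tinv α a i j = ∑' mm : ℤ, rfun ν T Tinv α a i j mm := rfl

/-- `E_ν'[a(X_0) ⊗ a(X_k)] = (1-α)^k E_ν[a ⊗ (a∘T^k)]` for `k ≥ 0`,
and `(1/n)·E_ν'[(∑_{k<n} a(X_k))^{⊗2}] → D(a) = ∑_{k∈ℤ} (1-α)^{|k|} E_ν[a ⊗ (a∘T^k)]`
entrywise. -/
theorem stmt7 {Ω : Type*} [MeasurableSpace Ω] (ν : Measure Ω) [IsProbabilityMeasure ν]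
    (T Tinv : Ω → Ω) (hT : MeasurePreserving T ν ν) (hTinv : Measurable Tinv)
    (hinv1 : Function.LeftInverse Tinv T) (hinv2 : Function.RightInverse Tinv T)
    (α : ℝ) (hα0 : 0 < α) (hα1 : α < 1)
    (ν' : Measure (ℤ → Ω)) [IsProbabilityMeasure ν'] (hchain : KnudsenChain ν T α ν')
    (d : ℕ) (hd : 1 ≤ d) (a : Ω → Fin d → ℝ) (hameas : Measurable a)
    (hacent : ∫ ω, a ω ∂ν = 0) (ha2 : MemLp a 2 ν) :
    (∀ k : ℕ, ∀ i j : Fin d,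
      ∫ ωt, a (ωt 0) i * a (ωt (k : ℤ)) j ∂ν'
        = (1 - α) ^ k * ∫ ω, a ω i * a (T^[k] ω) j ∂ν) ∧
    (∀ i j : Fin d,
      Tendsto (fun n : ℕ =>
          (∫ ωt, (∑ k ∈ Finset.range n, a (ωt (k : ℤ)) i)
              * (∑ k ∈ Finset.range n, a (ωt (k : ℤ)) j) ∂ν') / n)
        atTop (nhds (Dmat ν T Tinv α a i j))) := by
  classical
  have hTmeas : Measurable T := hT.measurable
  have hTinvMP : MeasurePreserving Tinv ν ν := by
    refine ⟨hTinv, ?_⟩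
    conv_lhs => rw [← hT.map_eq]
    rw [Measure.map_map hTinv hTmeas, show Tinv ∘ T = id from funext hinv1, Measure.map_id]
  have haint : Integrable a ν :=
    memLp_one_iff_integrable.mp (ha2.mono_exponent one_le_two)
  have hmeasC : ∀ i : Fin d, Measurable fun ω => a ω i := fun i =>
    (measurable_pi_apply i).comp hameas
  have hmem2 : ∀ i : Fin d, MemLp (fun ω => a ω i) 2 ν := fun i => by
    exact
      (ContinuousLinearMap.proj (R := ℝ) (φ := fun _ : Fin d => ℝ) i).comp_memLp' ha2
  have hcent : ∀ i : Fin d, ∫ x, a x i ∂ν = 0 := fun i => by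
    have h := (ContinuousLinearMap.proj (R := ℝ) (φ := fun _ : Fin d => ℝ)
      i).integral_comp_comm haint
    simpa [hacent] using h
  have hcorr : ∀ (i j : Fin d) (m : ℤ) (k : ℕ),
      ∫ ωt, a (ωt m) i * a (ωt (m + (k : ℤ))) j ∂ν'
        = (1 - α) ^ k * ∫ x, a x i * a (T^[k] x) j ∂ν :=
    fun i j m k => knudsen_corr_l2 hchain hT (hmeasC i) (hmeasC j) (hmem2 i) (hmem2 j)
      (hcent i) (hcent j) m k
  constructor
  · intro k i j
    simpa using hcorr i j 0 k
  · intro i j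
    have h1α : (0 : ℝ) ≤ 1 - α := by linarith
    have hsq : ∀ p : Fin d, Integrable (fun x => (a x p) ^ 2) ν := fun p => by
      simpa [sq] using integrable_mul_l2 (hmem2 p) (hmem2 p)
    have hBnd : ∀ (p q : Fin d) (S : Ω → Ω), MeasurePreserving S ν ν →
        |∫ x, a x p * a (S x) q ∂ν|
          ≤ (∫ x, (a x p) ^ 2 ∂ν + ∫ x, (a x q) ^ 2 ∂ν) / 2 := by
      intro p q S hS
      have hm2S : MemLp (fun x => a (S x) q) 2 ν := memL2_comp_mp hS (hmeasC q) (hmem2 q)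
      have hint : Integrable (fun x => a x p * a (S x) q) ν :=
        integrable_mul_l2 (hmem2 p) hm2S
      have hintsqS : Integrable (fun x => (a (S x) q) ^ 2) ν := by
        simpa [sq] using integrable_mul_l2 hm2S hm2S
      calc |∫ x, a x p * a (S x) q ∂ν| ≤ ∫ x, |a x p * a (S x) q| ∂ν := by
            simpa only [Real.norm_eq_abs] using
              norm_integral_le_integral_norm (μ := ν) (fun x => a x p * a (S x) q)
        _ ≤ ∫ x, ((a x p) ^ 2 + (a (S x) q) ^ 2) / 2 ∂ν := by
            refine integral_mono hint.abs (((hsq p).add hintsqS).div_const 2) fun x => ?_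
            rw [abs_mul]
            nlinarith [sq_nonneg (|a x p| - |a (S x) q|), sq_abs (a x p),
              sq_abs (a (S x) q), abs_nonneg (a x p), abs_nonneg (a (S x) q)]
        _ = (∫ x, (a x p) ^ 2 ∂ν + ∫ x, (a (S x) q) ^ 2 ∂ν) / 2 := by
            rw [integral_div, integral_add (hsq p) hintsqS]
        _ = (∫ x, (a x p) ^ 2 ∂ν + ∫ x, (a x q) ^ 2 ∂ν) / 2 := by
            rw [integral_comp_mp hS ((hmeasC q).pow_const 2).aestronglyMeasurable]
    have hiterMP : ∀ mm : ℤ, MeasurePreserving (iterZ T Tinv mm) ν ν := by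
      intro mm
      cases mm with
      | ofNat n => exact hT.iterate n
      | negSucc n => exact hTinvMP.iterate (n + 1)
    have hgeo : Summable (fun mm : ℤ =>
        (1 - α) ^ mm.natAbs * ((∫ x, (a x i) ^ 2 ∂ν + ∫ x, (a x j) ^ 2 ∂ν) / 2)) := by
      apply Summable.mul_right
      have hnat : Summable (fun n : ℕ => (1 - α) ^ n) :=
        summable_geometric_of_lt_one h1α (by linarith)
      apply Summable.of_nat_of_neg <;> simpa using hnat
    have hrsum : Summable (rfun ν T Tinv α a i j) := by
      refine Summable.of_norm_bounded hgeo fun mm => ?_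
      show ‖(1 - α) ^ mm.natAbs * ∫ x, a x i * a (iterZ T Tinv mm x) j ∂ν‖ ≤ _
      rw [Real.norm_eq_abs, abs_mul, abs_pow, abs_of_nonneg h1α]
      exact mul_le_mul_of_nonneg_left (hBnd i j _ (hiterMP mm)) (pow_nonneg h1α _)
    -- the two-point correlations
    have hAcl : ∀ k l : ℕ, ∫ ωt, a (ωt (k : ℤ)) i * a (ωt (l : ℤ)) j ∂ν'
        = rfun ν T Tinv α a i j ((l : ℤ) - (k : ℤ)) := by
      intro k l
      rcases le_or_gt k l with h | h
      · obtain ⟨n, rfl⟩ : ∃ n : ℕ, l = k + n := ⟨l - k, by omega⟩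
        have h2 := hcorr i j (k : ℤ) n
        rw [show ((k : ℤ) + (n : ℤ)) = ((k + n : ℕ) : ℤ) by push_cast; ring] at h2
        rw [h2, show ((k + n : ℕ) : ℤ) - (k : ℤ) = ((n : ℕ) : ℤ) by push_cast; ring]
        show _ = (1 - α) ^ ((n : ℕ) : ℤ).natAbs
            * ∫ x, a x i * a (iterZ T Tinv ((n : ℕ) : ℤ) x) j ∂ν
        rw [show iterZ T Tinv ((n : ℕ) : ℤ) = T^[n] from rfl, Int.natAbs_natCast]
      · obtain ⟨n, rfl⟩ : ∃ n : ℕ, k = l + (n + 1) := ⟨k - l - 1, by omega⟩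
        have h2 := hcorr j i (l : ℤ) (n + 1)
        rw [show ((l : ℤ) + ((n + 1 : ℕ) : ℤ)) = ((l + (n + 1) : ℕ) : ℤ) by push_cast; ring]
          at h2
        have hL : ∫ ωt, a (ωt ((l + (n + 1) : ℕ) : ℤ)) i * a (ωt (l : ℤ)) j ∂ν'
            = ∫ ωt, a (ωt (l : ℤ)) j * a (ωt ((l + (n + 1) : ℕ) : ℤ)) i ∂ν' := by
          congr 1; funext ωt; ring
        have hneg : ((l : ℤ) - ((l + (n + 1) : ℕ) : ℤ)) = Int.negSucc n := by
          rw [Int.negSucc_eq]; push_cast; ring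
        have hcov : ∫ x, a (T^[n + 1] x) i * a x j ∂ν
            = ∫ x, a x i * a (Tinv^[n + 1] x) j ∂ν := by
          have h0 : ∫ x, (fun y => a y i * a (Tinv^[n + 1] y) j) (T^[n + 1] x) ∂ν
              = ∫ x, a x i * a (Tinv^[n + 1] x) j ∂ν :=
            integral_comp_mp (hT.iterate (n + 1))
              (((hmeasC i).mul ((hmeasC j).comp (hTinv.iterate (n + 1)))).aestronglyMeasurable)
          rw [← h0]
          congr 1; funext x
          show a (T^[n + 1] x) i * a x j
              = a (T^[n + 1] x) i * a (Tinv^[n + 1] (T^[n + 1] x)) j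
          rw [Function.LeftInverse.iterate hinv1 (n + 1) x]
        rw [hL, h2, hneg]
        show (1 - α) ^ (n + 1) * ∫ x, a x j * a (T^[n + 1] x) i ∂ν
            = (1 - α) ^ (Int.negSucc n).natAbs
              * ∫ x, a x i * a (iterZ T Tinv (Int.negSucc n) x) j ∂ν
        rw [show (Int.negSucc n).natAbs = n + 1 from rfl,
          show iterZ T Tinv (Int.negSucc n) = Tinv^[n + 1] from rfl, ← hcov]
        congr 1
        congr 1
        funext x
        ring
    -- integrability of the products
    have hIprod : ∀ k l : ℕ,
        Integrable (fun ωt => a (ωt (k : ℤ)) i * a (ωt (l : ℤ)) j) ν' := fun k l =>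
      integrable_mul_l2 (memL2_eval (hchain.1 (k : ℤ)) (hmeasC i) (hmem2 i))
        (memL2_eval (hchain.1 (l : ℤ)) (hmeasC j) (hmem2 j))
    -- expansion of the quadratic form
    have hexp : ∀ n : ℕ,
        ∫ ωt, (∑ k ∈ Finset.range n, a (ωt (k : ℤ)) i)
            * (∑ k ∈ Finset.range n, a (ωt (k : ℤ)) j) ∂ν'
          = ∑ k ∈ Finset.range n, ∑ l ∈ Finset.range n,
              rfun ν T Tinv α a i j ((l : ℤ) - (k : ℤ)) := by
      intro n
      calc ∫ ωt, (∑ k ∈ Finset.range n, a (ωt (k : ℤ)) i)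
            * (∑ k ∈ Finset.range n, a (ωt (k : ℤ)) j) ∂ν'
          = ∫ ωt, ∑ k ∈ Finset.range n, ∑ l ∈ Finset.range n,
              a (ωt (k : ℤ)) i * a (ωt (l : ℤ)) j ∂ν' := by
            congr 1; funext ωt; rw [Finset.sum_mul_sum]
        _ = ∑ k ∈ Finset.range n, ∫ ωt, ∑ l ∈ Finset.range n,
              a (ωt (k : ℤ)) i * a (ωt (l : ℤ)) j ∂ν' :=
            integral_finset_sum _ (fun k _ => integrable_finset_sum _ fun l _ => hIprod k l)
        _ = ∑ k ∈ Finset.range n, ∑ l ∈ Finset.range n,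
              ∫ ωt, a (ωt (k : ℤ)) i * a (ωt (l : ℤ)) j ∂ν' :=
            Finset.sum_congr rfl fun k _ => integral_finset_sum _ (fun l _ => hIprod k l)
        _ = _ := Finset.sum_congr rfl fun k _ => Finset.sum_congr rfl fun l _ => hAcl k l
    -- partial symmetric sums converge to the tsum
    have hS : Tendsto (fun n : ℕ => ∑ mm ∈ Finset.Icc (-(n : ℤ)) (n : ℤ),
        rfun ν T Tinv α a i j mm) atTop (nhds (∑' mm, rfun ν T Tinv α a i j mm)) := by
      have h1 : Tendsto (fun n : ℕ => Finset.Icc (-(n : ℤ)) (n : ℤ)) atTop atTop := by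
        apply tendsto_atTop_finset_of_monotone
        · intro n m hnm
          apply Finset.Icc_subset_Icc
          · simp only [neg_le_neg_iff]; exact_mod_cast hnm
          · exact_mod_cast hnm
        · intro mm
          exact ⟨mm.natAbs, by simp only [Finset.mem_Icc]; omega⟩
      exact hrsum.hasSum.comp h1
    -- the double sum as a sum of symmetric partial sums
    have hsum_eq : ∀ n : ℕ,
        (∑ k ∈ Finset.range n, ∑ l ∈ Finset.range n,
            rfun ν T Tinv α a i j ((l : ℤ) - (k : ℤ)))
          = ∑ p ∈ Finset.range n, ∑ mm ∈ Finset.Icc (-(p : ℤ)) (p : ℤ),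
              rfun ν T Tinv α a i j mm := by
      set r : ℤ → ℝ := rfun ν T Tinv α a i j with hr_def
      intro n
      induction n with
      | zero => simp
      | succ n ihn =>
        have key : ∑ k ∈ Finset.range (n + 1), ∑ l ∈ Finset.range (n + 1), r ((l : ℤ) - k)
            = (∑ k ∈ Finset.range n, ∑ l ∈ Finset.range n, r ((l : ℤ) - k))
              + ((∑ l ∈ Finset.range n, r ((l : ℤ) - n))
                + ∑ k ∈ Finset.range (n + 1), r ((n : ℤ) - k)) := by
          calc ∑ k ∈ Finset.range (n + 1), ∑ l ∈ Finset.range (n + 1), r ((l : ℤ) - k)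
              = ∑ k ∈ Finset.range (n + 1),
                  ((∑ l ∈ Finset.range n, r ((l : ℤ) - k)) + r ((n : ℤ) - k)) :=
                Finset.sum_congr rfl fun k _ => Finset.sum_range_succ _ _
            _ = (∑ k ∈ Finset.range (n + 1), ∑ l ∈ Finset.range n, r ((l : ℤ) - k))
                + ∑ k ∈ Finset.range (n + 1), r ((n : ℤ) - k) := Finset.sum_add_distrib
            _ = ((∑ k ∈ Finset.range n, ∑ l ∈ Finset.range n, r ((l : ℤ) - k))
                + ∑ l ∈ Finset.range n, r ((l : ℤ) - n))
                + ∑ k ∈ Finset.range (n + 1), r ((n : ℤ) - k) := by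
                rw [Finset.sum_range_succ]
            _ = _ := by ring
        have himg1 : Finset.image (fun l : ℕ => (l : ℤ) - n) (Finset.range n)
            = Finset.Icc (-(n : ℤ)) (-1) := by
          ext mm
          simp only [Finset.mem_image, Finset.mem_range, Finset.mem_Icc]
          constructor
          · rintro ⟨l, hl, rfl⟩; omega
          · intro hmm; exact ⟨(mm + n).toNat, by omega, by omega⟩
        have himg2 : Finset.image (fun k : ℕ => (n : ℤ) - k) (Finset.range (n + 1))
            = Finset.Icc (0 : ℤ) (n : ℤ) := by
          ext mm
          simp only [Finset.mem_image, Finset.mem_range, Finset.mem_Icc]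
          constructor
          · rintro ⟨k, hk, rfl⟩; omega
          · intro hmm; exact ⟨((n : ℤ) - mm).toNat, by omega, by omega⟩
        have hs1 : ∑ l ∈ Finset.range n, r ((l : ℤ) - n)
            = ∑ mm ∈ Finset.Icc (-(n : ℤ)) (-1), r mm := by
          rw [← himg1, Finset.sum_image (fun x _ y _ hxy => by omega)]
        have hs2 : ∑ k ∈ Finset.range (n + 1), r ((n : ℤ) - k)
            = ∑ mm ∈ Finset.Icc (0 : ℤ) (n : ℤ), r mm := by
          rw [← himg2, Finset.sum_image (fun x _ y _ hxy => by omega)]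
        have hdisj : Disjoint (Finset.Icc (-(n : ℤ)) (-1)) (Finset.Icc (0 : ℤ) (n : ℤ)) := by
          rw [Finset.disjoint_left]
          intro mm h1 h2
          simp only [Finset.mem_Icc] at h1 h2
          omega
        have hunion : Finset.Icc (-(n : ℤ)) (-1) ∪ Finset.Icc (0 : ℤ) (n : ℤ)
            = Finset.Icc (-(n : ℤ)) (n : ℤ) := by
          ext mm
          simp only [Finset.mem_union, Finset.mem_Icc]
          omega
        rw [Finset.sum_range_succ (f := fun p => ∑ mm ∈ Finset.Icc (-(p : ℤ)) (p : ℤ), r mm),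
          ← ihn, key, hs1, hs2, ← Finset.sum_union hdisj, hunion]
    -- conclusion
    have hces := hS.cesaro
    rw [Dmat_eq_tsum_rfun]
    refine Tendsto.congr (fun n => ?_) hces
    rw [hexp n, hsum_eq n, div_eq_inv_mul]
end

section
/- Let f ∈ L²(Ω, ν) be real-valued with ∫ f dν = 0, and suppose that ∫ f² dν + 2·∑_{k≥1} (1−α)^k·∫ f·(f∘T^k) dν = 0 (the series converges absolutely since |∫ f·(f∘T^k) dν| ≤ ∫ f² dν for every k). Then f = 0 ν-almost everywhere. -/
open MeasureTheory Filter

open scoped RealInnerProductSpace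

set_option maxHeartbeats 1000000
set_option synthInstance.maxHeartbeats 400000

/-- If `f ∈ L²(ν)` is centered and
`∫ f² dν + 2 ∑_{k ≥ 1} (1-α)^k ∫ f · (f ∘ T^k) dν = 0`, then `f = 0` ν-a.e. -/
theorem stmt9 {Ω : Type*} [MeasurableSpace Ω] (ν : Measure Ω) [IsProbabilityMeasure ν]
    (T : Ω → Ω) (hT : MeasurePreserving T ν ν)
    (α : ℝ) (hα0 : 0 < α) (hα1 : α < 1)
    (f : Ω → ℝ) (hf : MemLp f 2 ν) (hcent : ∫ ω, f ω ∂ν = 0)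
    (hzero : (∫ ω, (f ω) ^ 2 ∂ν)
        + 2 * ∑' k : ℕ, (1 - α) ^ (k + 1) * ∫ ω, f ω * f (T^[k + 1] ω) ∂ν = 0) :
    f =ᵐ[ν] 0 := by
  set r : ℝ := 1 - α with hr
  have hr0 : 0 < r := by simp [hr]; linarith
  have hr1 : r < 1 := by simp [hr]; linarith
  set F : Lp ℝ 2 ν := hf.toLp f with hF
  set Uc : Lp ℝ 2 ν →L[ℝ] Lp ℝ 2 ν :=
    (Lp.compMeasurePreservingₗᵢ (E := ℝ) (p := 2) ℝ T hT).toContinuousLinearMap with hUc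
  have hUnorm : ∀ x : Lp ℝ 2 ν, ‖Uc x‖ = ‖x‖ := fun x =>
    (Lp.compMeasurePreservingₗᵢ (E := ℝ) (p := 2) ℝ T hT).norm_map x
  -- iterates of the Koopman operator applied to F
  have hmem : ∀ k : ℕ, MemLp (f ∘ T^[k]) 2 ν := fun k =>
    hf.comp_measurePreserving (hT.iterate k)
  have hiter : ∀ k : ℕ, (Uc ^ k) F = (hmem k).toLp (f ∘ T^[k]) := by
    intro k
    induction k with
    | zero => simp only [pow_zero, ContinuousLinearMap.one_apply]; rfl
    | succ k ih =>
      rw [pow_succ', ContinuousLinearMap.mul_apply, ih]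
      rfl
  have hiternorm : ∀ k : ℕ, ‖(Uc ^ k) F‖ = ‖F‖ := by
    intro k
    induction k with
    | zero => simp
    | succ k ih => rw [pow_succ', ContinuousLinearMap.mul_apply, hUnorm, ih]
  -- the series defining h is summable
  have hsummable : Summable (fun k : ℕ => r ^ k • (Uc ^ k) F) := by
    apply Summable.of_norm
    have : ∀ k : ℕ, ‖r ^ k • (Uc ^ k) F‖ = ‖F‖ * r ^ k := by
      intro k
      rw [norm_smul, hiternorm, Real.norm_eq_abs, abs_pow, abs_of_pos hr0, mul_comm]
    simp only [this]
    exact (summable_geometric_of_lt_one hr0.le hr1).mul_left _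
  set h : Lp ℝ 2 ν := ∑' k : ℕ, r ^ k • (Uc ^ k) F with hh
  -- recursion: h = F + r • Uc h
  have e1 : (fun k : ℕ => r ^ (k + 1) • (Uc ^ (k + 1)) F)
      = fun k : ℕ => (r • Uc) (r ^ k • (Uc ^ k) F) := by
    funext k
    simp only [ContinuousLinearMap.smul_apply, Uc.map_smul, smul_smul, pow_succ',
      ContinuousLinearMap.mul_apply]
  have hrec : h = F + r • Uc h := by
    have e2 := Summable.tsum_eq_zero_add hsummable
    rw [e1, ← (r • Uc).map_tsum hsummable, ← hh] at e2
    simpa using e2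
  -- inner products compute the covariances
  have hinner : ∀ k : ℕ, ⟪F, (Uc ^ k) F⟫ = ∫ ω, f ω * f (T^[k] ω) ∂ν := by
    intro k
    rw [hiter k, L2.inner_def]
    apply integral_congr_ae
    filter_upwards [hf.coeFn_toLp, (hmem k).coeFn_toLp] with ω h1 h2
    rw [RCLike.inner_apply]
    simp [hF, h1, h2, mul_comm]
  -- compute ⟪F, Uc h⟫
  have hFh : ⟪F, Uc h⟫ = ∑' k : ℕ, r ^ k * ∫ ω, f ω * f (T^[k + 1] ω) ∂ν := by
    rw [hh, Uc.map_tsum hsummable, ← innerSL_apply_apply (𝕜 := ℝ),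
      (innerSL ℝ F).map_tsum (Uc.summable hsummable)]
    apply tsum_congr
    intro k
    simp only [innerSL_apply_apply, Uc.map_smul, real_inner_smul_right]
    congr 1
    rw [← ContinuousLinearMap.mul_apply, ← pow_succ', hinner (k + 1)]
  -- the hypothesis in Hilbert-space form
  have hF2 : ∫ ω, (f ω) ^ 2 ∂ν = ‖F‖ ^ 2 := by
    have h0 := hinner 0
    simp only [pow_zero, ContinuousLinearMap.one_apply, Function.iterate_zero, id_eq] at h0
    rw [← real_inner_self_eq_norm_sq, h0]
    simp only [pow_two]
  have hz : ‖F‖ ^ 2 + 2 * (r * ⟪F, Uc h⟫) = 0 := by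
    rw [hFh, ← hF2, ← tsum_mul_left]
    simpa only [← mul_assoc, ← pow_succ'] using hzero
  -- therefore ‖h‖ = 0
  have hnorm : ‖h‖ ^ 2 = ‖F‖ ^ 2 + 2 * (r * ⟪F, Uc h⟫) + r ^ 2 * ‖h‖ ^ 2 := by
    conv_lhs => rw [hrec]
    rw [norm_add_sq_real, real_inner_smul_right, norm_smul, hUnorm, Real.norm_eq_abs,
      abs_of_pos hr0, mul_pow]
  rw [hz, zero_add] at hnorm
  have hr2 : (1 : ℝ) - r ^ 2 > 0 := by nlinarith
  have hhz : h = 0 := by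
    have h1 : (1 - r ^ 2) * ‖h‖ ^ 2 = 0 := by linarith
    have h2 : ‖h‖ ^ 2 = 0 := by
      rcases mul_eq_zero.mp h1 with h' | h'
      · linarith
      · exact h'
    rw [← norm_eq_zero]
    exact pow_eq_zero_iff (by norm_num) |>.mp h2
  have hFz : F = 0 := by
    have h3 := hrec
    rw [hhz] at h3
    simp only [map_zero, smul_zero, add_zero] at h3
    exact h3.symm
  have h4 : (F : Ω → ℝ) =ᵐ[ν] f := hf.coeFn_toLp
  rw [hFz] at h4
  exact h4.symm.trans (Lp.coeFn_zero _ _ _)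
end
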